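/- Let G₁ be a restricted frame graph, let G₂ be a chandelier with pivot p, and let v be a vertex of G₁. Then the graph obtained from the disjoint union of G₁ and G₂ by identifying v with p is a restricted frame graph. -/

import Mathlib

/-! ## Frames and restricted frame graphs -/

/-- An axis-parallel box in `ℝ²`, i.e. a product `[x1,x2] × [y1,y2]` of two closed
nondegenerate intervals. -/
structure Box : Type where
  x1 : ℝ
  x2 : ℝ
  y1 : ℝ
  y2 : ℝ
  hx : x1 < x2
  hy : y1 < y2

namespace Box

/-- The region bounded by the frame of a box: the closed box itself. -/
def region (B : Box) : Set (ℝ × ℝ) :=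
  {p : ℝ × ℝ | B.x1 ≤ p.1 ∧ p.1 ≤ B.x2 ∧ B.y1 ≤ p.2 ∧ p.2 ≤ B.y2}

/-- The frame of a box: the topological boundary of the closed box. -/
def frame (B : Box) : Set (ℝ × ℝ) :=
  {p : ℝ × ℝ | p ∈ B.region ∧ (p.1 = B.x1 ∨ p.1 = B.x2 ∨ p.2 = B.y1 ∨ p.2 = B.y2)}

/-- The left side `{x1} × [y1,y2]` of a frame. -/
def leftSide (B : Box) : Set (ℝ × ℝ) :=
  {p : ℝ × ℝ | p.1 = B.x1 ∧ B.y1 ≤ p.2 ∧ p.2 ≤ B.y2}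

/-- The right side `{x2} × [y1,y2]` of a frame. -/
def rightSide (B : Box) : Set (ℝ × ℝ) :=
  {p : ℝ × ℝ | p.1 = B.x2 ∧ B.y1 ≤ p.2 ∧ p.2 ≤ B.y2}

/-- The top side `[x1,x2] × {y2}` of a frame. -/
def topSide (B : Box) : Set (ℝ × ℝ) :=
  {p : ℝ × ℝ | p.2 = B.y2 ∧ B.x1 ≤ p.1 ∧ p.1 ≤ B.x2}

/-- The bottom side `[x1,x2] × {y1}` of a frame. -/
def bottomSide (B : Box) : Set (ℝ × ℝ) :=
  {p : ℝ × ℝ | p.2 = B.y1 ∧ B.x1 ≤ p.1 ∧ p.1 ≤ B.x2}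

/-- The four corners of a frame. -/
def corners (B : Box) : Set (ℝ × ℝ) :=
  {(B.x1, B.y1), (B.x1, B.y2), (B.x2, B.y1), (B.x2, B.y2)}

/-- `Box.Inside inner outer` : the frame of `outer` contains the frame of `inner`,
i.e. the two frames are disjoint and the frame of `inner` is contained in the region
bounded by the frame of `outer`. -/
def Inside (inner outer : Box) : Prop :=
  inner.frame ∩ outer.frame = ∅ ∧ inner.frame ⊆ outer.region

/-- `Box.Outside B outer` : the frames are disjoint and `B` is not inside `outer`. -/
def Outside (B outer : Box) : Prop :=
  B.frame ∩ outer.frame = ∅ ∧ ¬ Inside B outer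

end Box

/-- A family of frames `(F v)` is a representation of the graph `G` as a restricted
frame graph: distinct vertices are adjacent iff their frames intersect, and the four
restrictions on the representation hold. -/
structure IsFrameRepresentation {V : Type} (G : SimpleGraph V) (F : V → Box) : Prop where
  /-- Distinct vertices are adjacent iff their frames intersect. -/
  adj_iff : ∀ u v : V, u ≠ v → (G.Adj u v ↔ ((F u).frame ∩ (F v).frame).Nonempty)
  /-- (1) Corners of a frame do not coincide with any point of another frame. -/
  corner_free : ∀ u v : V, u ≠ v → (F u).corners ∩ (F v).frame = ∅
  /-- (2) The left side of a frame does not intersect any other frame. -/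
  left_free : ∀ u v : V, u ≠ v → (F u).leftSide ∩ (F v).frame = ∅
  /-- (3) If the right side of a frame intersects a second frame, this right side
  intersects both the top and the bottom side of that second frame. -/
  right_cross : ∀ u v : V, u ≠ v →
    ((F u).rightSide ∩ (F v).frame).Nonempty →
    ((F u).rightSide ∩ (F v).topSide).Nonempty ∧
      ((F u).rightSide ∩ (F v).bottomSide).Nonempty
  /-- (4) If two frames intersect, no third frame is entirely contained in the
  intersection of the regions bounded by the two frames. -/
  not_nested : ∀ u v w : V, u ≠ v → w ≠ u → w ≠ v →
    ((F u).frame ∩ (F v).frame).Nonempty →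
    ¬ ((F w).frame ⊆ (F u).region ∩ (F v).region)

/-- A graph is a restricted frame graph if it admits a frame representation. -/
def IsRestrictedFrameGraph {V : Type} (G : SimpleGraph V) : Prop :=
  ∃ F : V → Box, IsFrameRepresentation G F

/-! ## Basic graph notions -/

/-- The closed neighborhood `N[u] = {u} ∪ N(u)`. -/
def closedNbhd {V : Type} (G : SimpleGraph V) (u : V) : Set V :=
  insert u (G.neighborSet u)

/-- `G` has a full star-cutset: for some vertex `u` the removal of `N[u]`
disconnects `G`. -/
def HasFullStarCutset {V : Type} (G : SimpleGraph V) : Prop :=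
  ∃ u : V, ¬ (G.induce ((closedNbhd G u)ᶜ)).Preconnected

/-- `v` is a cut-vertex of `G`: its removal disconnects `G`. -/
def IsCutVertex {V : Type} (G : SimpleGraph V) (v : V) : Prop :=
  ¬ (G.induce {u : V | u ≠ v}).Preconnected

/-- `G` is a path graph: its vertices can be enumerated `0, …, n-1` so that two
vertices are adjacent iff they are consecutive. -/
def IsPathGraph {V : Type} (G : SimpleGraph V) : Prop :=
  ∃ (n : ℕ) (e : V ≃ Fin n), ∀ u v : V,
    G.Adj u v ↔ ((e u : ℕ) + 1 = (e v : ℕ) ∨ (e v : ℕ) + 1 = (e u : ℕ))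

/-- `G` is a cycle graph (on at least 3 vertices). -/
def IsCycleGraphOn {V : Type} (G : SimpleGraph V) : Prop :=
  ∃ n : ℕ, 3 ≤ n ∧ ∃ e : V ≃ Fin n, ∀ u v : V,
    G.Adj u v ↔ (((e u : ℕ) + 1) % n = (e v : ℕ) ∨ ((e v : ℕ) + 1) % n = (e u : ℕ))

/-- `x` is a leaf of `T`: it has exactly one neighbor. -/
def IsLeaf {V : Type} (T : SimpleGraph V) (x : V) : Prop :=
  (T.neighborSet x).ncard = 1

/-- `G` is a chandelier with pivot `v`: `G - v` is a tree `T` and `v` is adjacent to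
exactly the leaves of `T`. -/
def IsChandelierWithPivot {V : Type} (G : SimpleGraph V) (v : V) : Prop :=
  (G.induce {u : V | u ≠ v}).IsTree ∧
    ∀ u : ↥{u : V | u ≠ v}, (G.Adj v u.val ↔ IsLeaf (G.induce {u : V | u ≠ v}) u)

/-- `G` is a chandelier. -/
def IsChandelier {V : Type} (G : SimpleGraph V) : Prop :=
  ∃ v : V, IsChandelierWithPivot G v

/-- `G` is a luxury chandelier: a chandelier (with pivot `v` and tree `T = G - v`)
such that the neighbor in `T` of each leaf of `T` has degree 2 in `T`. -/
def IsLuxuryChandelier {V : Type} (G : SimpleGraph V) : Prop :=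
  ∃ v : V, IsChandelierWithPivot G v ∧
    ∀ x y : ↥{u : V | u ≠ v}, (G.induce {u : V | u ≠ v}).Adj x y →
      IsLeaf (G.induce {u : V | u ≠ v}) x →
      ((G.induce {u : V | u ≠ v}).neighborSet y).ncard = 2

/-! ## Multigraphs and subdivisions -/

/-- A loopless multigraph on vertex set `V`: a symmetric multiplicity function. -/
structure Multigraph (V : Type) where
  m : V → V → ℕ
  symm : ∀ u v : V, m u v = m v u
  loopless : ∀ v : V, m v v = 0

/-- The multigraph associated with a simple graph (each edge has multiplicity 1). -/
noncomputable def SimpleGraph.toMultigraph {V : Type} (G : SimpleGraph V) : Multigraph V where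
  m u v := @ite ℕ (G.Adj u v) (Classical.dec _) 1 0
  symm u v := by
    beta_reduce
    by_cases h : G.Adj u v
    · rw [if_pos h, if_pos h.symm]
    · rw [if_neg h, if_neg (fun h' => h h'.symm)]
  loopless v := by
    beta_reduce
    rw [if_neg (show ¬ G.Adj v v from G.irrefl)]

/-- The interior (set of internal vertices) of a walk. -/
def walkInterior {V : Type} {G : SimpleGraph V} {a b : V} (p : G.Walk a b) : Set V :=
  {w : V | w ∈ p.support ∧ w ≠ a ∧ w ≠ b}

/-- A witness that the simple graph `H` is a `≥k`-subdivision of the multigraph `G`: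
each edge of `G` (counted with multiplicity) is replaced by a path with at least
`k+1` edges between (the images of) its endpoints, these paths being internally
disjoint from each other and from the branch vertices, and covering all of `H`. -/
structure MultiSubdivision {V W : Type} (G : Multigraph V) (H : SimpleGraph W) (k : ℕ) where
  /-- the embedding of branch vertices -/
  f : V ↪ W
  /-- the path replacing the `i`-th parallel edge between `u` and `v` -/
  path : ∀ u v : V, Fin (G.m u v) → H.Walk (f u) (f v)
  path_symm : ∀ (u v : V) (i : Fin (G.m u v)),
    path v u (Fin.cast (G.symm u v) i) = (path u v i).reverse
  path_ne : ∀ (u v : V) (i i' : Fin (G.m u v)), (i : ℕ) ≠ (i' : ℕ) →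
    path u v i ≠ path u v i'
  isPath : ∀ (u v : V) (i : Fin (G.m u v)), (path u v i).IsPath
  length_le : ∀ (u v : V) (i : Fin (G.m u v)), k + 1 ≤ (path u v i).length
  /-- the paths are internally disjoint from the branch vertices -/
  interior_avoid : ∀ (u v : V) (i : Fin (G.m u v)) (x : V),
    f x ∉ walkInterior (path u v i)
  /-- distinct paths are pairwise internally disjoint -/
  interior_disjoint : ∀ (u v : V) (i : Fin (G.m u v)) (u' v' : V) (i' : Fin (G.m u' v')),
    (walkInterior (path u v i) ∩ walkInterior (path u' v' i')).Nonempty →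
    (u = u' ∧ v = v' ∧ (i : ℕ) = (i' : ℕ)) ∨ (u = v' ∧ v = u' ∧ (i : ℕ) = (i' : ℕ))
  /-- every vertex of `H` is a branch vertex or an internal vertex of a path -/
  vertex_cover : ∀ w : W, (∃ x : V, f x = w) ∨
    ∃ (u v : V) (i : Fin (G.m u v)), w ∈ walkInterior (path u v i)
  /-- every edge of `H` lies on one of the paths -/
  edge_cover : ∀ e ∈ H.edgeSet, ∃ (u v : V) (i : Fin (G.m u v)), e ∈ (path u v i).edges

/-- `H` is a `≥k`-subdivision of the multigraph `G`. -/
def IsSubdivisionGE {V W : Type} (G : Multigraph V) (k : ℕ) (H : SimpleGraph W) : Prop :=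
  Nonempty (MultiSubdivision G H k)

/-- `H` is a subdivision of the simple graph `G` (every edge is replaced by a path
with at least one edge). -/
def IsSubdivision {V W : Type} (G : SimpleGraph V) (H : SimpleGraph W) : Prop :=
  IsSubdivisionGE G.toMultigraph 0 H

namespace Multigraph

/-- The underlying simple graph of a multigraph. -/
def support {V : Type} (G : Multigraph V) : SimpleGraph V where
  Adj u v := 0 < G.m u v
  symm := by
    constructor
    intro u v h
    show 0 < G.m v u
    rw [G.symm v u]
    exact h
  loopless := by
    constructor
    intro v h
    have h' : 0 < G.m v v := h
    rw [G.loopless v] at h'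
    exact Nat.lt_irrefl 0 h'

/-- A multigraph is connected if its underlying simple graph is. -/
def Connected {V : Type} (G : Multigraph V) : Prop :=
  G.support.Connected

/-- A multigraph is 2-connected if it is connected, has at least two vertices, and
deleting any single vertex leaves it connected. -/
def TwoConnected {V : Type} (G : Multigraph V) : Prop :=
  G.support.Connected ∧ (∃ u v : V, u ≠ v) ∧
    ∀ v : V, (G.support.induce {u : V | u ≠ v}).Connected

/-- `v` is a feedback vertex of the multigraph `G`: `G - v` contains no cycle
(where a pair of parallel edges forms a cycle of length 2). -/
def IsFeedbackVertex {V : Type} (G : Multigraph V) (v : V) : Prop :=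
  (G.support.induce {u : V | u ≠ v}).IsAcyclic ∧
    ∀ u w : V, u ≠ v → w ≠ v → G.m u w ≤ 1

end Multigraph

/-! ## Induced cycles and big vertices -/

/-- `C` induces a cycle in `G`. -/
def IsInducedCycle {V : Type} (G : SimpleGraph V) (C : Set V) : Prop :=
  IsCycleGraphOn (G.induce C)

/-- `v` is a big vertex of the (induced cycle on) `C` with respect to the frame
representation `F`: `v ∈ C` and `F v` contains the frame of every vertex of `C`
outside `N[v]`. -/
def IsBigVertexOf {V : Type} (G : SimpleGraph V) (F : V → Box) (C : Set V) (v : V) : Prop :=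
  v ∈ C ∧ ∀ u ∈ C, u ≠ v → ¬ G.Adj v u → Box.Inside (F u) (F v)

/-- `v` is a big vertex of the representation `F`: it is a big vertex of some
induced cycle of `G`. -/
def IsBigVertex {V : Type} (G : SimpleGraph V) (F : V → Box) (v : V) : Prop :=
  ∃ C : Set V, IsInducedCycle G C ∧ IsBigVertexOf G F C v

/-! ## Gluing a chandelier onto a vertex -/

/-- The graph obtained from the disjoint union of `G₁` and `G₂` by identifying the
vertex `v` of `G₁` with the vertex `p` of `G₂`. -/
def glueAt {V₁ V₂ : Type} (G₁ : SimpleGraph V₁) (G₂ : SimpleGraph V₂) (v : V₁) (p : V₂) :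
    SimpleGraph (V₁ ⊕ {x : V₂ // x ≠ p}) :=
  SimpleGraph.fromRel (fun a b =>
    match a, b with
    | Sum.inl u, Sum.inl w => G₁.Adj u w
    | Sum.inr u, Sum.inr w => G₂.Adj u.val w.val
    | Sum.inl u, Sum.inr w => u = v ∧ G₂.Adj p w.val
    | Sum.inr _, Sum.inl _ => False)

/-! ## The multigraphs `Ĥ₁` and `Ĥ₂` -/

/-- The multiplicity matrix of `Ĥ₁` (vertices `a₁ = 0`, `b₁ = 1`, `v₁ = 2`, `v₂ = 3`,
`a₂ = 4`, `b₂ = 5`). -/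
def H1hatMatrix : Matrix (Fin 6) (Fin 6) ℕ :=
  !![0, 2, 1, 0, 0, 0;
     2, 0, 1, 0, 0, 0;
     1, 1, 0, 1, 0, 0;
     0, 0, 1, 0, 1, 1;
     0, 0, 0, 1, 0, 2;
     0, 0, 0, 1, 2, 0]

/-- The multigraph `Ĥ₁`: two disjoint digons `a₁b₁`, `a₂b₂`, and single edges
`a₁v₁`, `b₁v₁`, `v₁v₂`, `a₂v₂`, `b₂v₂`. -/
def H1hat : Multigraph (Fin 6) where
  m u v := H1hatMatrix u v
  symm := by intro u v; fin_cases u <;> fin_cases v <;> rfl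
  loopless := by intro v; fin_cases v <;> rfl

/-- The multiplicity matrix of `Ĥ₂` (vertices `a₁ = 0`, `b₁ = 1`, `v = 2`,
`a₂ = 3`, `b₂ = 4`). -/
def H2hatMatrix : Matrix (Fin 5) (Fin 5) ℕ :=
  !![0, 2, 1, 0, 0;
     2, 0, 1, 0, 0;
     1, 1, 0, 1, 1;
     0, 0, 1, 0, 2;
     0, 0, 1, 2, 0]

/-- The multigraph `Ĥ₂`: two digons `a₁b₁`, `a₂b₂`, and single edges
`a₁v`, `b₁v`, `a₂v`, `b₂v`. -/
def H2hat : Multigraph (Fin 5) where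
  m u v := H2hatMatrix u v
  symm := by intro u v; fin_cases u <;> fin_cases v <;> rfl
  loopless := by intro v; fin_cases v <;> rfl

/-! ## Subdivisions of `K₄` and their type -/

/-- The complete graph on four vertices. -/
def K4 : SimpleGraph (Fin 4) := ⊤

/-- The set of edges of `K₄` that are subdivided at least once in the subdivision
witnessed by `S` (i.e. replaced by a path with at least two edges). -/
def subdividedEdges {W : Type} {H : SimpleGraph W}
    (S : MultiSubdivision K4.toMultigraph H 0) : Set (Sym2 (Fin 4)) :=
  {e : Sym2 (Fin 4) | ∃ (u v : Fin 4) (i : Fin (K4.toMultigraph.m u v)),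
    e = s(u, v) ∧ 2 ≤ (S.path u v i).length}

/-! ## Adding a twin -/

/-- The graph obtained from `G` by adding a twin of `v`: a new vertex, non-adjacent
to `v`, whose neighborhood is exactly `N(v)`. -/
def addTwin {V : Type} (G : SimpleGraph V) (v : V) : SimpleGraph (V ⊕ Unit) :=
  SimpleGraph.fromRel (fun a b =>
    match a, b with
    | Sum.inl u, Sum.inl w => G.Adj u w
    | Sum.inr _, Sum.inl u => G.Adj v u
    | _, _ => False)

/-! ## The construction of Burling and Pawlik et al. -/

/-- A graph-stable set pair: a graph together with a collection of sets of vertices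
(intended: stable sets). -/
structure GSPair : Type 1 where
  V : Type
  G : SimpleGraph V
  S : Set (Set V)

namespace GSPair

/-- The vertex type of `next P`: the original vertices, the vertices `(s, u)` of the
copy `H_s` of the graph for each `s ∈ 𝒮`, and the new vertices `v_{s,t}`. -/
abbrev nextVertex (P : GSPair) : Type :=
  P.V ⊕ ((↥P.S × P.V) ⊕ (↥P.S × ↥P.S))

/-- The adjacency generator for the graph of `next P`. -/
def nextRel (P : GSPair) : P.nextVertex → P.nextVertex → Prop
  | Sum.inl u, Sum.inl v => P.G.Adj u v
  | Sum.inr (Sum.inl (s, u)), Sum.inr (Sum.inl (t, v)) => s = t ∧ P.G.Adj u v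
  | Sum.inr (Sum.inr (s, t)), Sum.inr (Sum.inl (s', v)) => s = s' ∧ v ∈ (t : Set P.V)
  | _, _ => False

/-- The procedure `next`: add a disjoint copy `H_s` of the graph for each `s ∈ 𝒮`, a
vertex `v_{s,t}` whose neighborhood is exactly the copy of `t` inside `H_s` for all
`s, t ∈ 𝒮`, and take as new collection of stable sets all `s ∪ t_s` and
`s ∪ {v_{s,t}}`. -/
def next (P : GSPair) : GSPair where
  V := P.nextVertex
  G := SimpleGraph.fromRel P.nextRel
  S := {A : Set P.nextVertex | ∃ s t : ↥P.S,
    A = (Sum.inl '' (s : Set P.V) : Set P.nextVertex) ∪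
        ((fun u : P.V => (Sum.inr (Sum.inl (s, u)) : P.nextVertex)) '' (t : Set P.V)) ∨
    A = (Sum.inl '' (s : Set P.V) : Set P.nextVertex) ∪ {Sum.inr (Sum.inr (s, t))}}

/-- The starting pair: a single vertex, with the single stable set consisting of
that vertex. -/
def base : GSPair := ⟨PUnit, ⊥, {Set.univ}⟩

/-- `P` is an induced subgraph-stable set pair of `Q`. -/
def IsInducedSubpair (P Q : GSPair) : Prop :=
  ∃ f : P.V ↪ Q.V, (∀ u v : P.V, P.G.Adj u v ↔ Q.G.Adj (f u) (f v)) ∧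
    ∀ A ∈ P.S, ∃ B ∈ Q.S, A = f ⁻¹' B

/-- A graph-stable set pair is constructible if it is an induced subgraph-stable set
pair of some iterate of `next` on the starting pair. -/
def Constructible (P : GSPair) : Prop :=
  ∃ i : ℕ, IsInducedSubpair P (next^[i] base)

end GSPair


section BoxHelpers

namespace Box

lemma frame_cases {B : Box} {z : ℝ × ℝ} (hz : z ∈ B.frame) :
    z ∈ B.leftSide ∨ z ∈ B.rightSide ∨ z ∈ B.topSide ∨ z ∈ B.bottomSide := by
  obtain ⟨⟨h1, h2, h3, h4⟩, hc⟩ := hz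
  rcases hc with h | h | h | h
  · exact Or.inl ⟨h, h3, h4⟩
  · exact Or.inr (Or.inl ⟨h, h3, h4⟩)
  · exact Or.inr (Or.inr (Or.inr ⟨h, h1, h2⟩))
  · exact Or.inr (Or.inr (Or.inl ⟨h, h1, h2⟩))

lemma mem_frame_of_left {B : Box} {z : ℝ × ℝ} (h : z ∈ B.leftSide) : z ∈ B.frame :=
  ⟨⟨le_of_eq h.1.symm, by rw [h.1]; exact B.hx.le, h.2.1, h.2.2⟩, Or.inl h.1⟩

lemma mem_frame_of_right {B : Box} {z : ℝ × ℝ} (h : z ∈ B.rightSide) : z ∈ B.frame :=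
  ⟨⟨by rw [h.1]; exact B.hx.le, le_of_eq h.1, h.2.1, h.2.2⟩, Or.inr (Or.inl h.1)⟩

lemma mem_frame_of_top {B : Box} {z : ℝ × ℝ} (h : z ∈ B.topSide) : z ∈ B.frame :=
  ⟨⟨h.2.1, h.2.2, by rw [h.1]; exact B.hy.le, le_of_eq h.1⟩, Or.inr (Or.inr (Or.inr h.1))⟩

lemma mem_frame_of_bottom {B : Box} {z : ℝ × ℝ} (h : z ∈ B.bottomSide) : z ∈ B.frame :=
  ⟨⟨h.2.1, h.2.2, le_of_eq h.1.symm, by rw [h.1]; exact B.hy.le⟩, Or.inr (Or.inr (Or.inl h.1))⟩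

lemma frame_subset_region (B : Box) : B.frame ⊆ B.region := fun _ hz => hz.1

lemma isClosed_region (B : Box) : IsClosed B.region := by
  have h : B.region = (fun z : ℝ × ℝ => z.1) ⁻¹' (Set.Icc B.x1 B.x2) ∩
      (fun z : ℝ × ℝ => z.2) ⁻¹' (Set.Icc B.y1 B.y2) := by
    ext z
    simp only [region, Set.mem_setOf_eq, Set.mem_inter_iff, Set.mem_preimage, Set.mem_Icc]
    tauto
  rw [h]
  exact (isClosed_Icc.preimage continuous_fst).inter (isClosed_Icc.preimage continuous_snd)

lemma isClosed_frame (B : Box) : IsClosed B.frame := by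
  have h : B.frame = B.region ∩ ({z : ℝ × ℝ | z.1 = B.x1} ∪ {z : ℝ × ℝ | z.1 = B.x2} ∪
      ({z : ℝ × ℝ | z.2 = B.y1} ∪ {z : ℝ × ℝ | z.2 = B.y2})) := by
    ext z
    simp only [frame, Set.mem_setOf_eq, Set.mem_inter_iff, Set.mem_union]
    tauto
  rw [h]
  refine B.isClosed_region.inter (IsClosed.union (IsClosed.union ?_ ?_) (IsClosed.union ?_ ?_))
  · exact isClosed_eq continuous_fst continuous_const
  · exact isClosed_eq continuous_fst continuous_const
  · exact isClosed_eq continuous_snd continuous_const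
  · exact isClosed_eq continuous_snd continuous_const

lemma corners_subset_frame (B : Box) : B.corners ⊆ B.frame := by
  intro z hz
  rcases hz with h | h | h | h
  · exact h ▸ ⟨⟨le_refl _, B.hx.le, le_refl _, B.hy.le⟩, Or.inl rfl⟩
  · exact h ▸ ⟨⟨le_refl _, B.hx.le, B.hy.le, le_refl _⟩, Or.inl rfl⟩
  · exact h ▸ ⟨⟨B.hx.le, le_refl _, le_refl _, B.hy.le⟩, Or.inr (Or.inl rfl)⟩
  · exact (Set.mem_singleton_iff.mp h) ▸ ⟨⟨B.hx.le, le_refl _, B.hy.le, le_refl _⟩, Or.inr (Or.inl rfl)⟩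

lemma frame_nonempty (B : Box) : B.frame.Nonempty :=
  ⟨(B.x1, B.y1), ⟨⟨le_refl _, B.hx.le, le_refl _, B.hy.le⟩, Or.inl rfl⟩⟩

end Box

end BoxHelpers


section RepLemmas

variable {V₁ : Type} {G₁ : SimpleGraph V₁} {F : V₁ → Box}

lemma rep_notmem_inter {A B : Set (ℝ × ℝ)} (h : A ∩ B = ∅) {z : ℝ × ℝ}
    (hA : z ∈ A) (hB : z ∈ B) : False :=
  Set.eq_empty_iff_forall_notMem.mp h z ⟨hA, hB⟩

lemma rep_horiz_horiz (hF : IsFrameRepresentation G₁ F) {u v : V₁} (huv : u ≠ v) {z : ℝ × ℝ}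
    (hu : z ∈ (F u).topSide ∨ z ∈ (F u).bottomSide)
    (hv : z ∈ (F v).topSide ∨ z ∈ (F v).bottomSide) : False := by
  have hu' : (z.2 = (F u).y2 ∨ z.2 = (F u).y1) ∧ (F u).x1 ≤ z.1 ∧ z.1 ≤ (F u).x2 := by
    rcases hu with h | h
    · exact ⟨Or.inl h.1, h.2⟩
    · exact ⟨Or.inr h.1, h.2⟩
  have hv' : (z.2 = (F v).y2 ∨ z.2 = (F v).y1) ∧ (F v).x1 ≤ z.1 ∧ z.1 ≤ (F v).x2 := by
    rcases hv with h | h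
    · exact ⟨Or.inl h.1, h.2⟩
    · exact ⟨Or.inr h.1, h.2⟩
  obtain ⟨hyu, hxu1, hxu2⟩ := hu'
  obtain ⟨hyv, hxv1, hxv2⟩ := hv'
  rcases le_or_gt (F v).x1 (F u).x1 with h | h
  · -- corner ((F u).x1, z.2) of F u lies on frame of F v
    have hc : ((F u).x1, z.2) ∈ (F u).corners := by
      rcases hyu with hy | hy
      · rw [show ((F u).x1, z.2) = ((F u).x1, (F u).y2) from by rw [hy]]
        simp [Box.corners]
      · rw [show ((F u).x1, z.2) = ((F u).x1, (F u).y1) from by rw [hy]]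
        simp [Box.corners]
    have hf : ((F u).x1, z.2) ∈ (F v).frame := by
      rcases hyv with hy | hy
      · exact Box.mem_frame_of_top ⟨hy, h, le_trans hxu1 hxv2⟩
      · exact Box.mem_frame_of_bottom ⟨hy, h, le_trans hxu1 hxv2⟩
    exact rep_notmem_inter (hF.corner_free u v huv) hc hf
  · have hc : ((F v).x1, z.2) ∈ (F v).corners := by
      rcases hyv with hy | hy
      · rw [show ((F v).x1, z.2) = ((F v).x1, (F v).y2) from by rw [hy]]
        simp [Box.corners]
      · rw [show ((F v).x1, z.2) = ((F v).x1, (F v).y1) from by rw [hy]]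
        simp [Box.corners]
    have hf : ((F v).x1, z.2) ∈ (F u).frame := by
      rcases hyu with hy | hy
      · exact Box.mem_frame_of_top ⟨hy, h.le, le_trans hxv1 hxu2⟩
      · exact Box.mem_frame_of_bottom ⟨hy, h.le, le_trans hxv1 hxu2⟩
    exact rep_notmem_inter (hF.corner_free v u (Ne.symm huv)) hc hf

/-- If `F u` intersects `F v` then the top-right corner of `F v` is not in the region of `F u`. -/
lemma rep_kappa_notin_region (hF : IsFrameRepresentation G₁ F) {v u : V₁} (huv : u ≠ v)
    (hint : ((F u).frame ∩ (F v).frame).Nonempty) :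
    (((F v).x2, (F v).y2)) ∉ (F u).region := by
  intro hk
  obtain ⟨z, hzu, hzv⟩ := hint
  rcases Box.frame_cases hzu with hL | hR | hTB
  · exact rep_notmem_inter (hF.left_free u v huv) hL hzv
  · -- z on right side of F u : use right_cross u v
    obtain ⟨⟨t, htr, htt⟩, -⟩ := hF.right_cross u v huv ⟨z, hR, hzv⟩
    -- htr : t.1 = (F u).x2 ..., htt : t.2 = (F v).y2, (F v).x1 ≤ t.1 ≤ (F v).x2
    have hne : (F u).x2 ≠ (F v).x2 := by
      intro he
      have hc : t ∈ (F v).corners := by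
        have : t = ((F v).x2, (F v).y2) := Prod.ext (htr.1.trans he) htt.1
        rw [this]
        simp [Box.corners]
      exact rep_notmem_inter (hF.corner_free v u (Ne.symm huv)) hc (Box.mem_frame_of_right htr)
    have hlt : (F u).x2 < (F v).x2 := lt_of_le_of_ne (htr.1 ▸ htt.2.2) hne
    exact absurd hk.2.1 (not_le.mpr hlt)
  · -- z on top or bottom side of F u
    rcases Box.frame_cases hzv with hL | hR | hTB' 
    · exact rep_notmem_inter (hF.left_free v u (Ne.symm huv)) hL hzu
    · obtain ⟨⟨t, htr, htt⟩, -⟩ := hF.right_cross v u (Ne.symm huv) ⟨z, hR, hzu⟩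
      have hne : (F u).y2 ≠ (F v).y2 := by
        intro he
        have hc : t ∈ (F v).corners := by
          have : t = ((F v).x2, (F v).y2) := Prod.ext htr.1 (htt.1.trans he)
          rw [this]
          simp [Box.corners]
        exact rep_notmem_inter (hF.corner_free v u (Ne.symm huv)) hc (Box.mem_frame_of_top htt)
      have hlt : (F u).y2 < (F v).y2 := lt_of_le_of_ne (htt.1 ▸ htr.2.2) hne
      exact absurd hk.2.2.2 (not_le.mpr hlt)
    · exact rep_horiz_horiz hF huv hTB hTB'


lemma rep_kappa_notin_frame (hF : IsFrameRepresentation G₁ F) {v u : V₁} (huv : u ≠ v) :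
    (((F v).x2, (F v).y2)) ∉ (F u).frame := by
  intro h
  have hc : (((F v).x2, (F v).y2)) ∈ (F v).corners := by simp [Box.corners]
  exact rep_notmem_inter (hF.corner_free v u (Ne.symm huv)) hc h

end RepLemmas


section FreeBox

variable {V₁ : Type} {G₁ : SimpleGraph V₁} {F : V₁ → Box}

lemma rep_nested (hF : IsFrameRepresentation G₁ F) {v a : V₁} (hav : a ≠ v)
    (hk : (((F v).x2, (F v).y2)) ∈ (F a).region) :
    (F v).frame ⊆ (F a).region := by
  have hknf : (((F v).x2, (F v).y2)) ∉ (F a).frame := rep_kappa_notin_frame hF hav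
  have hs1 : (F a).x1 < (F v).x2 := lt_of_le_of_ne hk.1 (fun h => hknf ⟨hk, Or.inl h.symm⟩)
  have hs2 : (F v).x2 < (F a).x2 :=
    lt_of_le_of_ne hk.2.1 (fun h => hknf ⟨hk, Or.inr (Or.inl h)⟩)
  have hs3 : (F a).y1 < (F v).y2 :=
    lt_of_le_of_ne hk.2.2.1 (fun h => hknf ⟨hk, Or.inr (Or.inr (Or.inl h.symm))⟩)
  have hs4 : (F v).y2 < (F a).y2 :=
    lt_of_le_of_ne hk.2.2.2 (fun h => hknf ⟨hk, Or.inr (Or.inr (Or.inr h))⟩)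
  have hnint : ¬ ((F a).frame ∩ (F v).frame).Nonempty :=
    fun h => rep_kappa_notin_region hF hav h hk
  have hx1 : (F a).x1 ≤ (F v).x1 := by
    by_contra h
    push_neg at h
    exact rep_notmem_inter (hF.left_free a v hav)
      (show ((F a).x1, (F v).y2) ∈ (F a).leftSide from ⟨rfl, hs3.le, hs4.le⟩)
      (Box.mem_frame_of_top ⟨rfl, h.le, hs1.le⟩)
  have hy1 : (F a).y1 ≤ (F v).y1 := by
    by_contra h
    push_neg at h
    exact hnint ⟨((F v).x2, (F a).y1),
      Box.mem_frame_of_bottom ⟨rfl, hk.1, hk.2.1⟩,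
      Box.mem_frame_of_right ⟨rfl, h.le, hs3.le⟩⟩
  intro z hz
  obtain ⟨⟨h1, h2, h3, h4⟩, -⟩ := hz
  exact ⟨le_trans hx1 h1, le_trans h2 hs2.le, le_trans hy1 h3, le_trans h4 hs4.le⟩

lemma rep_kappa_notin_pair (hF : IsFrameRepresentation G₁ F) {v a b : V₁}
    (hav : a ≠ v) (hbv : b ≠ v) (hab : a ≠ b)
    (hint : ((F a).frame ∩ (F b).frame).Nonempty) :
    ¬ ((((F v).x2, (F v).y2)) ∈ (F a).region ∧ (((F v).x2, (F v).y2)) ∈ (F b).region) := by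
  rintro ⟨ha, hb⟩
  exact hF.not_nested a b v hab (Ne.symm hav) (Ne.symm hbv) hint
    (fun z hz => ⟨rep_nested hF hav ha hz, rep_nested hF hbv hb hz⟩)

lemma rep_freebox [Fintype V₁] (hF : IsFrameRepresentation G₁ F) (v : V₁) :
    ∃ ρ : ℝ, 0 < ρ ∧ (F v).x1 < (F v).x2 - ρ ∧ (F v).y1 < (F v).y2 - 3*ρ ∧
      (∀ u, u ≠ v → ∀ z : ℝ × ℝ, (F v).x2 - ρ ≤ z.1 → z.1 ≤ (F v).x2 + ρ →
        (F v).y2 - 3*ρ ≤ z.2 → z.2 ≤ (F v).y2 - ρ →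
        z ∉ (F u).frame ∧ (((F u).frame ∩ (F v).frame).Nonempty → z ∉ (F u).region)) ∧
      (∀ a b, a ≠ v → b ≠ v → a ≠ b → ((F a).frame ∩ (F b).frame).Nonempty →
        ∀ z : ℝ × ℝ, (F v).x2 - ρ ≤ z.1 → z.1 ≤ (F v).x2 + ρ →
          (F v).y2 - 3*ρ ≤ z.2 → z.2 ≤ (F v).y2 - ρ →
          ¬(z ∈ (F a).region ∧ z ∈ (F b).region)) := by
  classical
  set κ : ℝ × ℝ := ((F v).x2, (F v).y2) with hκ
  set S : Set (ℝ × ℝ) :=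
    (⋃ u ∈ {u : V₁ | u ≠ v}, (F u).frame) ∪
    ((⋃ u ∈ {u : V₁ | u ≠ v ∧ ((F u).frame ∩ (F v).frame).Nonempty}, (F u).region) ∪
     (⋃ q ∈ {q : V₁ × V₁ | q.1 ≠ v ∧ q.2 ≠ v ∧ q.1 ≠ q.2 ∧
        ((F q.1).frame ∩ (F q.2).frame).Nonempty}, (F q.1).region ∩ (F q.2).region)) with hS
  have hSclosed : IsClosed S := by
    refine IsClosed.union ?_ (IsClosed.union ?_ ?_)
    · exact Set.Finite.isClosed_biUnion (Set.toFinite _) (fun u _ => Box.isClosed_frame _)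
    · exact Set.Finite.isClosed_biUnion (Set.toFinite _) (fun u _ => Box.isClosed_region _)
    · exact Set.Finite.isClosed_biUnion (Set.toFinite _)
        (fun q _ => (Box.isClosed_region _).inter (Box.isClosed_region _))
  have hκS : κ ∉ S := by
    rw [hS]
    intro hmem
    simp only [Set.mem_union, Set.mem_iUnion, Set.mem_setOf_eq] at hmem
    rcases hmem with ⟨u, hu, hm⟩ | ⟨u, ⟨hu, hint⟩, hm⟩ | ⟨q, ⟨h1, h2, h3, h4⟩, hm⟩
    · exact rep_kappa_notin_frame hF hu hm
    · exact rep_kappa_notin_region hF hu hint hm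
    · exact rep_kappa_notin_pair hF h1 h2 h3 h4 ⟨hm.1, hm.2⟩
  obtain ⟨ε, hε, hball⟩ := Metric.isOpen_iff.mp hSclosed.isOpen_compl κ hκS
  set ρ := min (ε/4) (min (((F v).x2 - (F v).x1)/2) (((F v).y2 - (F v).y1)/4)) with hρdef
  have hρε : ρ ≤ ε/4 := min_le_left _ _
  have hρx : ρ ≤ ((F v).x2 - (F v).x1)/2 := le_trans (min_le_right _ _) (min_le_left _ _)
  have hρy : ρ ≤ ((F v).y2 - (F v).y1)/4 := le_trans (min_le_right _ _) (min_le_right _ _)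
  have hvx := (F v).hx
  have hvy := (F v).hy
  have hρ0 : 0 < ρ := by
    have h1 : (0:ℝ) < ε/4 := by linarith
    have h2 : (0:ℝ) < ((F v).x2 - (F v).x1)/2 := by linarith
    have h3 : (0:ℝ) < ((F v).y2 - (F v).y1)/4 := by linarith
    exact lt_min h1 (lt_min h2 h3)
  have hzS : ∀ z : ℝ × ℝ, (F v).x2 - ρ ≤ z.1 → z.1 ≤ (F v).x2 + ρ →
      (F v).y2 - 3*ρ ≤ z.2 → z.2 ≤ (F v).y2 - ρ → z ∉ S := by
    intro z h1 h2 h3 h4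
    apply hball
    rw [Metric.mem_ball, Prod.dist_eq]
    have d1 : dist z.1 κ.1 < ε := by
      rw [Real.dist_eq, abs_lt]
      constructor <;> simp only [hκ] <;> linarith
    have d2 : dist z.2 κ.2 < ε := by
      rw [Real.dist_eq, abs_lt]
      constructor <;> simp only [hκ] <;> linarith
    exact max_lt d1 d2
  refine ⟨ρ, hρ0, by linarith, by linarith, ?_, ?_⟩
  · intro u hu z h1 h2 h3 h4
    have hz := hzS z h1 h2 h3 h4
    rw [hS] at hz
    constructor
    · intro hf
      exact hz (Or.inl (Set.mem_biUnion (show u ∈ {u : V₁ | u ≠ v} from hu) hf))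
    · intro hint hr
      exact hz (Or.inr (Or.inl (Set.mem_biUnion
        (show u ∈ {u : V₁ | u ≠ v ∧ ((F u).frame ∩ (F v).frame).Nonempty} from ⟨hu, hint⟩) hr)))
  · intro a b ha hb hab hint z h1 h2 h3 h4 hr
    have hz := hzS z h1 h2 h3 h4
    rw [hS] at hz
    exact hz (Or.inr (Or.inr (Set.mem_biUnion
      (show (a, b) ∈ {q : V₁ × V₁ | q.1 ≠ v ∧ q.2 ≠ v ∧ q.1 ≠ q.2 ∧
        ((F q.1).frame ∩ (F q.2).frame).Nonempty} from ⟨ha, hb, hab, hint⟩)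
      (⟨hr.1, hr.2⟩ : z ∈ (F a).region ∩ (F b).region))))

end FreeBox


section TreeInfra

open SimpleGraph

variable {ι : Type} {T : SimpleGraph ι}

noncomputable def twalk (hT : T.IsTree) (r u : ι) : T.Walk u r :=
  (hT.existsUnique_path u r).choose

lemma twalk_isPath (hT : T.IsTree) (r u : ι) : (twalk hT r u).IsPath :=
  (hT.existsUnique_path u r).choose_spec.1

lemma twalk_unique (hT : T.IsTree) (r u : ι) (q : T.Walk u r) (hq : q.IsPath) :
    q = twalk hT r u :=
  (hT.existsUnique_path u r).choose_spec.2 q hq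

noncomputable def tpar (hT : T.IsTree) (r u : ι) : ι := (twalk hT r u).getVert 1

noncomputable def tdep (hT : T.IsTree) (r u : ι) : ℕ := (twalk hT r u).length

lemma twalk_root (hT : T.IsTree) (r : ι) : twalk hT r r = Walk.nil :=
  (twalk_unique hT r r Walk.nil Walk.IsPath.nil).symm

lemma tdep_root (hT : T.IsTree) (r : ι) : tdep hT r r = 0 := by
  rw [tdep, twalk_root]
  rfl

lemma tdep_eq_zero (hT : T.IsTree) {r u : ι} (h : tdep hT r u = 0) : u = r :=
  Walk.eq_of_length_eq_zero h

lemma twalk_eq_cons (hT : T.IsTree) {r u : ι} (hur : u ≠ r) :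
    ∃ (h : T.Adj u (tpar hT r u)) (q : T.Walk (tpar hT r u) r),
      twalk hT r u = Walk.cons h q := by
  obtain ⟨w, h, q, hq⟩ := Walk.exists_eq_cons_of_ne hur (twalk hT r u)
  have hw : tpar hT r u = w := by
    rw [tpar, hq, Walk.getVert_cons_succ, Walk.getVert_zero]
  subst hw
  exact ⟨h, q, hq⟩

lemma tpar_adj (hT : T.IsTree) {r u : ι} (hur : u ≠ r) : T.Adj u (tpar hT r u) :=
  (twalk_eq_cons hT hur).choose

lemma tdep_par (hT : T.IsTree) {r u : ι} (hur : u ≠ r) :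
    tdep hT r u = tdep hT r (tpar hT r u) + 1 := by
  obtain ⟨h, q, hq⟩ := twalk_eq_cons hT hur
  have hqp : q.IsPath := by
    have hp := twalk_isPath hT r u
    rw [hq] at hp
    exact hp.of_cons
  have hq2 : q = twalk hT r (tpar hT r u) := twalk_unique hT r _ q hqp
  rw [tdep, hq, Walk.length_cons, tdep, ← hq2]

lemma tadj_iff (hT : T.IsTree) (r u w : ι) :
    T.Adj u w ↔ (u ≠ r ∧ tpar hT r u = w) ∨ (w ≠ r ∧ tpar hT r w = u) := by
  classical
  constructor
  · intro hadj
    by_cases huw : u ∈ (twalk hT r w).support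
    · right
      have hwr : w ≠ r := by
        intro he
        subst he
        rw [twalk_root] at huw
        rw [Walk.mem_support_nil_iff] at huw
        subst huw
        exact T.irrefl hadj
      have hPp : (twalk hT r w).IsPath := twalk_isPath hT r w
      have ht : ((twalk hT r w).takeUntil u huw).IsPath := hPp.takeUntil huw
      have hsp : (Walk.cons hadj.symm Walk.nil : T.Walk w u).IsPath := by
        rw [Walk.cons_isPath_iff]
        refine ⟨Walk.IsPath.nil, ?_⟩
        simp only [Walk.support_nil, List.mem_singleton]
        exact hadj.ne'
      have hsingle : (twalk hT r w).takeUntil u huw = Walk.cons hadj.symm Walk.nil :=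
        (hT.existsUnique_path w u).unique ht hsp
      have key : twalk hT r w = Walk.cons hadj.symm ((twalk hT r w).dropUntil u huw) := by
        conv_lhs => rw [← Walk.take_spec (twalk hT r w) huw]
        rw [hsingle]
        simp
      refine ⟨hwr, ?_⟩
      rw [tpar]
      conv_lhs => rw [key]
      rw [Walk.getVert_cons_succ, Walk.getVert_zero]
    · left
      have hW1 : (Walk.cons hadj (twalk hT r w)).IsPath :=
        (Walk.cons_isPath_iff hadj (twalk hT r w)).mpr ⟨twalk_isPath hT r w, huw⟩
      have he : Walk.cons hadj (twalk hT r w) = twalk hT r u := twalk_unique hT r u _ hW1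
      have hur : u ≠ r := by
        intro h
        subst h
        rw [twalk_root] at he
        simpa using congrArg Walk.length he
      refine ⟨hur, ?_⟩
      rw [tpar, ← he, Walk.getVert_cons_succ, Walk.getVert_zero]
  · rintro (⟨hur, he⟩ | ⟨hwr, he⟩)
    · exact he ▸ tpar_adj hT hur
    · exact (he ▸ tpar_adj hT hwr).symm

end TreeInfra

section AbstractTrich

variable {ι : Type}

lemma dep_iter (par : ι → ι) (dep : ι → ℕ) (root : ι)
    (hdr : dep root = 0)
    (hd : ∀ u, u ≠ root → dep u = dep (par u) + 1) :
    ∀ k u, k ≤ dep u → dep (par^[k] u) + k = dep u := by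
  intro k
  induction k with
  | zero => simp
  | succ k ih =>
    intro u hk
    have hur : u ≠ root := by
      intro h
      subst h
      omega
    rw [Function.iterate_succ_apply]
    have h1 : dep u = dep (par u) + 1 := hd u hur
    have := ih (par u) (by omega)
    omega

lemma trich_abstract (par : ι → ι) (dep : ι → ℕ) (root : ι)
    (hdr : dep root = 0)
    (hd : ∀ u, u ≠ root → dep u = dep (par u) + 1)
    (hd0 : ∀ u, dep u = 0 → u = root) :
    ∀ u w : ι, u ≠ w →
      (∃ k, 1 ≤ k ∧ par^[k] w = u ∧ k + dep u = dep w) ∨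
      (∃ k, 1 ≤ k ∧ par^[k] u = w ∧ k + dep w = dep u) ∨
      (∃ a b j m, par^[j] u = a ∧ par^[m] w = b ∧ j + dep a = dep u ∧ m + dep b = dep w ∧
        a ≠ b ∧ par a = par b ∧ dep a = dep b ∧ 1 ≤ dep a) := by
  suffices H : ∀ n u w, dep u + dep w ≤ n → u ≠ w →
      (∃ k, 1 ≤ k ∧ par^[k] w = u ∧ k + dep u = dep w) ∨
      (∃ k, 1 ≤ k ∧ par^[k] u = w ∧ k + dep w = dep u) ∨
      (∃ a b j m, par^[j] u = a ∧ par^[m] w = b ∧ j + dep a = dep u ∧ m + dep b = dep w ∧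
        a ≠ b ∧ par a = par b ∧ dep a = dep b ∧ 1 ≤ dep a) by
    exact fun u w h => H (dep u + dep w) u w le_rfl h
  intro n
  induction n with
  | zero =>
    intro u w hsum hne
    exact absurd (by rw [hd0 u (by omega), hd0 w (by omega)]) hne
  | succ n ih =>
    intro u w hsum hne
    rcases lt_trichotomy (dep u) (dep w) with hlt | heq | hgt
    · have hwr : w ≠ root := by
        intro h
        subst h
        omega
      have hdw : dep w = dep (par w) + 1 := hd w hwr
      by_cases hpw : par w = u
      · exact Or.inl ⟨1, le_rfl, by simpa using hpw, by rw [hpw] at hdw; omega⟩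
      · rcases ih u (par w) (by omega) (fun h => hpw h.symm) with
          ⟨k, hk1, hk2, hk3⟩ | ⟨k, hk1, hk2, hk3⟩ | ⟨a, b, j, m, h1, h2, h3, h4, h5, h6, h7, h8⟩
        · exact Or.inl ⟨k + 1, by omega,
            by rw [Function.iterate_succ_apply]; exact hk2, by omega⟩
        · omega
        · exact Or.inr (Or.inr ⟨a, b, j, m + 1, h1,
            by rw [Function.iterate_succ_apply]; exact h2, h3, by omega, h5, h6, h7, h8⟩)
    · by_cases hz : dep u = 0
      · exact absurd (by rw [hd0 u hz, hd0 w (by omega)]) hne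
      · have hur : u ≠ root := by
          intro h
          subst h
          omega
        have hwr : w ≠ root := by
          intro h
          subst h
          omega
        by_cases hpp : par u = par w
        · exact Or.inr (Or.inr ⟨u, w, 0, 0, rfl, rfl, by simp, by simp, hne, hpp, heq, by omega⟩)
        · have hpu := hd u hur
          have hpw := hd w hwr
          rcases ih (par u) (par w) (by omega) hpp with
            ⟨k, hk1, hk2, hk3⟩ | ⟨k, hk1, hk2, hk3⟩ | ⟨a, b, j, m, h1, h2, h3, h4, h5, h6, h7, h8⟩
          · omega
          · omega
          · exact Or.inr (Or.inr ⟨a, b, j + 1, m + 1,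
              by rw [Function.iterate_succ_apply]; exact h1,
              by rw [Function.iterate_succ_apply]; exact h2,
              by omega, by omega, h5, h6, h7, h8⟩)
    · have hur : u ≠ root := by
        intro h
        subst h
        omega
      have hdu : dep u = dep (par u) + 1 := hd u hur
      by_cases hpu : par u = w
      · exact Or.inr (Or.inl ⟨1, le_rfl, by simpa using hpu, by rw [hpu] at hdu; omega⟩)
      · rcases ih (par u) w (by omega) hpu with
          ⟨k, hk1, hk2, hk3⟩ | ⟨k, hk1, hk2, hk3⟩ | ⟨a, b, j, m, h1, h2, h3, h4, h5, h6, h7, h8⟩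
        · omega
        · exact Or.inr (Or.inl ⟨k + 1, by omega,
            by rw [Function.iterate_succ_apply]; exact hk2, by omega⟩)
        · exact Or.inr (Or.inr ⟨a, b, j + 1, m, 
            by rw [Function.iterate_succ_apply]; exact h1, h2, by omega, h4, h5, h6, h7, h8⟩)

end AbstractTrich


section Layout

/-- Abstract geometric layout data for the chandelier tree inside a normalized box
`(-2,5) × (0,1)`, with the pivot line at `x = 2`. -/
structure GoodLayout {ι : Type} (T : SimpleGraph ι) (ℓ : ι → Prop) where
  xL : ι → ℝ
  xR : ι → ℝ
  yc : ι → ℝ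
  yd : ι → ℝ
  hxlo : ∀ u, (-2:ℝ) < xL u
  hxhi : ∀ u, xR u < 5
  hxlt : ∀ u, xL u < xR u
  hyc : ∀ u, 0 < yc u
  hycd : ∀ u, yc u < yd u
  hyd : ∀ u, yd u < 1
  leaf_lo : ∀ u, ℓ u → xL u < 2
  leaf_hi : ∀ u, ℓ u → 2 < xR u
  nonleaf : ∀ u, ¬ ℓ u → xR u < 2
  tri : ∀ u w, u ≠ w →
    ((yd u < yc w ∨ yd w < yc u) ∧ ¬ T.Adj u w) ∨
    ((yc u < yc w ∧ yd w < yd u ∧ xL u < xL w ∧ xL w < xR u ∧ xR u < xR w) ∧ T.Adj u w) ∨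
    ((yc w < yc u ∧ yd u < yd w ∧ xL w < xL u ∧ xL u < xR w ∧ xR w < xR u) ∧ T.Adj u w) ∨
    ((yc u < yc w ∧ yd w < yd u ∧ xR u < xL w) ∧ ¬ T.Adj u w) ∨
    ((yc w < yc u ∧ yd u < yd w ∧ xR w < xL u) ∧ ¬ T.Adj u w)

/-- Nested-interval recursion along the tree structure. -/
noncomputable def yrec {ι : Type} (par : ι → ι) (idx : ι → ℕ) (N : ℕ) : ℕ → ι → ℝ × ℝ
  | 0, _ => (1/3, 2/3)
  | (d+1), u =>
    ((yrec par idx N d (par u)).1 +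
       ((yrec par idx N d (par u)).2 - (yrec par idx N d (par u)).1) * (3*(idx u)+1) / (3*N),
     (yrec par idx N d (par u)).1 +
       ((yrec par idx N d (par u)).2 - (yrec par idx N d (par u)).1) * (3*(idx u)+2) / (3*N))

lemma goodLayout_exists {ι : Type} (T : SimpleGraph ι) (ℓ : ι → Prop)
    (par : ι → ι) (dep : ι → ℕ) (root : ι) (idx : ι → ℕ) (N : ℕ)
    (hdr : dep root = 0)
    (hd : ∀ u, u ≠ root → dep u = dep (par u) + 1)
    (hd0 : ∀ u, dep u = 0 → u = root)
    (hadj : ∀ u w, T.Adj u w ↔ (u ≠ root ∧ par u = w) ∨ (w ≠ root ∧ par w = u))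
    (hidx : Function.Injective idx)
    (hidxN : ∀ u, idx u < N)
    (hroot : ¬ ℓ root ∨ ∀ u, ℓ u)
    (hchild : ∀ q w, q ≠ root → w ≠ root → par w = q → ¬ ℓ q) :
    Nonempty (GoodLayout T ℓ) := by
  classical
  have hN : 0 < N := Nat.pos_of_ne_zero (by rintro rfl; exact Nat.not_lt_zero _ (hidxN root))
  have hNR : (0:ℝ) < 3*N := by
    have h1 : (1:ℝ) ≤ (N:ℝ) := by exact_mod_cast hN
    linarith
  have hfrac : ∀ a b : ℝ, 0 < a → a < b → 1/b < 1/a :=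
    fun a b ha h => one_div_lt_one_div_of_lt ha h
  have hnr : ∀ u : ι, u ≠ root → (1:ℝ) ≤ (dep u : ℝ) := by
    intro u hu
    have : dep u ≠ 0 := fun h => hu (hd0 u h)
    exact_mod_cast Nat.one_le_iff_ne_zero.mpr this
  -- y intervals
  set yc : ι → ℝ := fun u => (yrec par idx N (dep u) u).1 with hycdef
  set yd : ι → ℝ := fun u => (yrec par idx N (dep u) u).2 with hyddef
  have hyroot : yc root = 1/3 ∧ yd root = 2/3 := by
    constructor
    · simp only [hycdef]
      rw [hdr, yrec]
    · simp only [hyddef]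
      rw [hdr, yrec]
  have hystep : ∀ u, u ≠ root →
      yc u = yc (par u) + (yd (par u) - yc (par u)) * (3*(idx u:ℝ)+1) / (3*N) ∧
      yd u = yc (par u) + (yd (par u) - yc (par u)) * (3*(idx u:ℝ)+2) / (3*N) := by
    intro u hu
    have h1 : dep u = dep (par u) + 1 := hd u hu
    constructor
    · simp only [hycdef, hyddef]
      rw [h1, yrec]
    · simp only [hycdef, hyddef]
      rw [h1, yrec]
  -- slot arithmetic
  have slot1 : ∀ (c d : ℝ) (i : ℕ), c < d → i < N →
      c < c + (d-c) * (3*(i:ℝ)+1) / (3*N) ∧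
      c + (d-c) * (3*(i:ℝ)+1) / (3*N) < c + (d-c) * (3*(i:ℝ)+2) / (3*N) ∧
      c + (d-c) * (3*(i:ℝ)+2) / (3*N) < d := by
    intro c d i hcd hiN
    have hD : (0:ℝ) < d - c := by linarith
    have hi : (0:ℝ) ≤ (i:ℝ) := Nat.cast_nonneg i
    have hiN' : (i:ℝ) + 1 ≤ (N:ℝ) := by exact_mod_cast hiN
    refine ⟨?_, ?_, ?_⟩
    · have h2 : (0:ℝ) < (d-c) * (3*(i:ℝ)+1) / (3*N) :=
        div_pos (mul_pos hD (by linarith)) hNR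
      linarith
    · have h2 : (d-c) * (3*(i:ℝ)+1) / (3*N) < (d-c) * (3*(i:ℝ)+2) / (3*N) := by
        apply (div_lt_div_iff_of_pos_right hNR).mpr
        nlinarith
      linarith
    · have h2 : (d-c) * (3*(i:ℝ)+2) / (3*N) < d - c := by
        rw [div_lt_iff₀ hNR]
        nlinarith
      linarith
  have gap : ∀ (c d : ℝ) (i j : ℕ), c < d → i < j →
      c + (d-c) * (3*(i:ℝ)+2) / (3*N) < c + (d-c) * (3*(j:ℝ)+1) / (3*N) := by
    intro c d i j hcd hij
    have hD : (0:ℝ) < d - c := by linarith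
    have hij' : (i:ℝ) + 1 ≤ (j:ℝ) := by exact_mod_cast hij
    have h2 : (d-c) * (3*(i:ℝ)+2) / (3*N) < (d-c) * (3*(j:ℝ)+1) / (3*N) := by
      apply (div_lt_div_iff_of_pos_right hNR).mpr
      nlinarith
    linarith
  -- validity of intervals
  have hvalid : ∀ u : ι, 0 < yc u ∧ yc u < yd u ∧ yd u < 1 := by
    suffices H : ∀ n : ℕ, ∀ u : ι, dep u = n → 0 < yc u ∧ yc u < yd u ∧ yd u < 1 by
      exact fun u => H (dep u) u rfl
    intro n
    induction n using Nat.strong_induction_on with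
    | _ n ih =>
      intro u hn
      by_cases hu : u = root
      · subst hu
        rw [hyroot.1, hyroot.2]
        norm_num
      · have h1 : dep u = dep (par u) + 1 := hd u hu
        have hp := ih (dep (par u)) (by omega) (par u) rfl
        obtain ⟨hs1, hs2⟩ := hystep u hu
        have hs := slot1 (yc (par u)) (yd (par u)) (idx u) hp.2.1 (hidxN u)
        rw [hs1, hs2]
        refine ⟨by linarith [hs.1, hp.1], hs.2.1, by linarith [hs.2.2, hp.2.2]⟩
  have hstep_nest : ∀ u, u ≠ root → yc (par u) < yc u ∧ yd u < yd (par u) := by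
    intro u hu
    obtain ⟨hs1, hs2⟩ := hystep u hu
    have hs := slot1 (yc (par u)) (yd (par u)) (idx u) (hvalid (par u)).2.1 (hidxN u)
    rw [hs1, hs2]
    exact ⟨hs.1, hs.2.2⟩
  have hnest : ∀ k u a, par^[k+1] u = a → (k+1) + dep a = dep u →
      yc a < yc u ∧ yd u < yd a := by
    intro k
    induction k with
    | zero =>
      intro u a h1 h2
      have hur : u ≠ root := by
        intro h
        subst h
        omega
      have h1' : par u = a := by simpa using h1
      subst h1'
      exact hstep_nest u hur
    | succ k ih =>
      intro u a h1 h2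
      have hur : u ≠ root := by
        intro h
        subst h
        omega
      have hdp : dep u = dep (par u) + 1 := hd u hur
      rw [Function.iterate_succ_apply] at h1
      have := ih (par u) a h1 (by omega)
      have hs := hstep_nest u hur
      exact ⟨lt_trans this.1 hs.1, lt_trans hs.2 this.2⟩
  have hnest0 : ∀ j u a, par^[j] u = a → j + dep a = dep u →
      yc a ≤ yc u ∧ yd u ≤ yd a := by
    intro j u a h1 h2
    cases j with
    | zero =>
      simp only [Function.iterate_zero, id_eq] at h1
      subst h1
      exact ⟨le_refl _, le_refl _⟩
    | succ j =>
      have := hnest j u a h1 h2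
      exact ⟨this.1.le, this.2.le⟩
  have hsib : ∀ a b, a ≠ b → par a = par b → a ≠ root → b ≠ root →
      yd a < yc b ∨ yd b < yc a := by
    intro a b hab hpp har hbr
    have hia : idx a ≠ idx b := fun h => hab (hidx h)
    obtain ⟨ha1, ha2⟩ := hystep a har
    obtain ⟨hb1, hb2⟩ := hystep b hbr
    rw [hpp] at ha1 ha2
    rcases lt_or_gt_of_ne hia with h | h
    · left
      rw [ha2, hb1]
      exact gap _ _ _ _ (hvalid (par b)).2.1 h
    · right
      rw [hb2, ha1]
      exact gap _ _ _ _ (hvalid (par b)).2.1 h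
  -- x coordinates
  set xL : ι → ℝ := fun u => if u = root then (-1:ℝ)
    else 2 - 1/(dep u:ℝ) - 1/((dep u:ℝ)+1) with hxLdef
  set xR : ι → ℝ := fun u => if ℓ u then 4 - 1/((dep u:ℝ)+1)
    else 2 - 2/((dep u:ℝ)+2) with hxRdef
  have exL : ∀ u, u ≠ root → xL u = 2 - 1/(dep u:ℝ) - 1/((dep u:ℝ)+1) := by
    intro u hu
    simp only [hxLdef, if_neg hu]
  have exLr : ∀ u, u = root → xL u = -1 := by
    intro u hu
    simp only [hxLdef, if_pos hu]
  have exRl : ∀ u, ℓ u → xR u = 4 - 1/((dep u:ℝ)+1) := by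
    intro u hu
    simp only [hxRdef, if_pos hu]
  have exRn : ∀ u, ¬ ℓ u → xR u = 2 - 2/((dep u:ℝ)+2) := by
    intro u hu
    simp only [hxRdef, if_neg hu]
  have hxLhalf : ∀ u, u ≠ root → (1/2:ℝ) ≤ xL u := by
    intro u hu
    have h1 := hnr u hu
    have h2 : 1/(dep u:ℝ) ≤ 1 := by
      rw [div_le_one (by linarith)]
      linarith
    have h3 : 1/((dep u:ℝ)+1) ≤ 1/2 := by
      rw [div_le_div_iff₀ (by linarith) (by norm_num)]
      linarith
    rw [exL u hu]
    linarith
  have hxLlt2 : ∀ u, xL u < 2 := by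
    intro u
    by_cases hu : u = root
    · rw [exLr u hu]
      norm_num
    · have h1 := hnr u hu
      have h2 : 0 < 1/(dep u:ℝ) := by positivity
      have h3 : 0 < 1/((dep u:ℝ)+1) := by positivity
      rw [exL u hu]
      linarith
  have hxRl : ∀ u, ℓ u → 3 ≤ xR u ∧ xR u < 4 := by
    intro u hu
    have h1 : 0 < (dep u:ℝ)+1 := by positivity
    have h2 : 0 < 1/((dep u:ℝ)+1) := by positivity
    have h3 : 1/((dep u:ℝ)+1) ≤ 1 := by
      rw [div_le_one h1]
      have : (0:ℝ) ≤ (dep u:ℝ) := Nat.cast_nonneg _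
      linarith
    rw [exRl u hu]
    constructor <;> linarith
  have hxRnl : ∀ u, ¬ ℓ u → 1 ≤ xR u ∧ xR u < 2 := by
    intro u hu
    have h1 : (0:ℝ) < (dep u:ℝ)+2 := by positivity
    have h2 : 0 < 2/((dep u:ℝ)+2) := by positivity
    have h3 : 2/((dep u:ℝ)+2) ≤ 1 := by
      rw [div_le_one h1]
      have : (0:ℝ) ≤ (dep u:ℝ) := Nat.cast_nonneg _
      linarith
    rw [exRn u hu]
    constructor <;> linarith
  have hxR1 : ∀ u, 1 ≤ xR u := by
    intro u
    by_cases hu : ℓ u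
    · linarith [(hxRl u hu).1]
    · exact (hxRnl u hu).1
  -- crossing inequalities for parent/child
  have hxcross : ∀ u w, w ≠ root → par w = u →
      xL u < xL w ∧ xL w < xR u ∧ xR u < xR w := by
    intro u w hwr hpw
    have hdw : dep w = dep u + 1 := by rw [hd w hwr, hpw]
    have hdw' : (dep w : ℝ) = (dep u : ℝ) + 1 := by exact_mod_cast hdw
    have hd0' : (0:ℝ) ≤ (dep u : ℝ) := Nat.cast_nonneg _
    have hxLw : xL w = 2 - 1/((dep u:ℝ)+1) - 1/((dep u:ℝ)+2) := by
      rw [exL w hwr, hdw']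
      ring_nf
    refine ⟨?_, ?_, ?_⟩
    · by_cases hu : u = root
      · have h1 := hxLhalf w hwr
        rw [exLr u hu]
        linarith
      · have h1 := hnr u hu
        have h2 : 1/((dep u:ℝ)+2) < 1/(dep u:ℝ) := hfrac _ _ (by linarith) (by linarith)
        rw [exL u hu, hxLw]
        linarith
    · by_cases hu : ℓ u
      · have h1 := (hxRl u hu).1
        rw [hxLw]
        have h2 : 0 < 1/((dep u:ℝ)+1) := by positivity
        have h3 : 0 < 1/((dep u:ℝ)+2) := by positivity
        linarith
      · have h2 : 1/((dep u:ℝ)+2) < 1/((dep u:ℝ)+1) := hfrac _ _ (by linarith) (by linarith)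
        have he : (2:ℝ)/((dep u:ℝ)+2) = 1/((dep u:ℝ)+2) + 1/((dep u:ℝ)+2) := by ring
        rw [exRn u hu, hxLw]
        linarith
    · by_cases hu : ℓ u
      · have hur : u = root := by
          by_contra hur
          exact hchild u w hur hwr hpw hu
        have hlw : ℓ w := by
          rcases hroot with h | h
          · exact absurd (hur ▸ hu) h
          · exact h w
        have h2 : 1/((dep u:ℝ)+2) < 1/((dep u:ℝ)+1) := hfrac _ _ (by linarith) (by linarith)
        rw [exRl u hu, exRl w hlw, hdw',
          show ((dep u:ℝ) + 1 + 1) = ((dep u:ℝ) + 2) from by ring]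
        linarith
      · by_cases hw : ℓ w
        · have h1 := (hxRnl u hu).2
          have h2 := (hxRl w hw).1
          linarith
        · have h3 : 1/((dep u:ℝ)+3) < 1/((dep u:ℝ)+2) := hfrac _ _ (by linarith) (by linarith)
          have e1 : (2:ℝ)/((dep u:ℝ)+3) = 1/((dep u:ℝ)+3) + 1/((dep u:ℝ)+3) := by ring
          have e2 : (2:ℝ)/((dep u:ℝ)+2) = 1/((dep u:ℝ)+2) + 1/((dep u:ℝ)+2) := by ring
          rw [exRn u hu, exRn w hw, hdw',
            show ((dep u:ℝ) + 1 + 2) = ((dep u:ℝ) + 3) from by ring]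
          linarith
  -- far inequalities for non-parent ancestors
  have hxfar : ∀ u w k, 2 ≤ k → par^[k] w = u → k + dep u = dep w → xR u < xL w := by
    intro u w k hk2 hky hkd
    have hdep_it := dep_iter par dep root hdr hd
    have hnlu : ¬ ℓ u := by
      intro hlu
      have hc1 : par (par^[k-1] w) = u := by
        have e : k = (k-1) + 1 := by omega
        rw [e, Function.iterate_succ_apply'] at hky
        exact hky
      have hdc1 : dep (par^[k-1] w) + (k-1) = dep w := hdep_it (k-1) w (by omega)
      have hc1r : par^[k-1] w ≠ root := by
        intro h
        rw [h, hdr] at hdc1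
        omega
      cases hroot with
      | inl h =>
        have hur : u ≠ root := fun he => h (he ▸ hlu)
        exact hchild u (par^[k-1] w) hur hc1r hc1 hlu
      | inr h =>
        have hc2 : par (par^[k-2] w) = par^[k-1] w := by
          have e : k - 1 = (k-2) + 1 := by omega
          conv_rhs => rw [e]
          rw [Function.iterate_succ_apply']
        have hdc2 : dep (par^[k-2] w) + (k-2) = dep w := hdep_it (k-2) w (by omega)
        have hc2r : par^[k-2] w ≠ root := by
          intro hh
          rw [hh, hdr] at hdc2
          omega
        exact hchild (par^[k-1] w) (par^[k-2] w) hc1r hc2r hc2 (h _)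
    have hwr : w ≠ root := by
      intro h
      rw [h, hdr] at hkd
      omega
    have hdw : (dep u : ℝ) + 2 ≤ (dep w : ℝ) := by
      have : dep u + 2 ≤ dep w := by omega
      exact_mod_cast this
    have hdwpos : (1:ℝ) ≤ (dep w:ℝ) := hnr w hwr
    have h1 : 1/(dep w:ℝ) ≤ 1/((dep u:ℝ)+2) := by
      rcases eq_or_lt_of_le hdw with h | h
      · rw [← h]
      · exact (hfrac _ _ (by linarith) h).le
    have h2 : 1/((dep w:ℝ)+1) < 1/((dep u:ℝ)+2) := hfrac _ _ (by linarith) (by linarith)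
    have he : (2:ℝ)/((dep u:ℝ)+2) = 1/((dep u:ℝ)+2) + 1/((dep u:ℝ)+2) := by ring
    rw [exRn u hnlu, exL w hwr]
    linarith
  -- non-adjacency for far pairs
  have hnadj_far : ∀ u w k, 2 ≤ k → par^[k] w = u → k + dep u = dep w → ¬ T.Adj u w := by
    intro u w k hk2 hky hkd hA
    rcases (hadj u w).mp hA with ⟨hur, hpu⟩ | ⟨hwr, hpw⟩
    · have := hd u hur
      rw [hpu] at this
      omega
    · have := hd w hwr
      rw [hpw] at this
      omega
  refine ⟨⟨xL, xR, yc, yd, ?_, ?_, ?_, ?_, ?_, ?_, ?_, ?_, ?_, ?_⟩⟩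
  · intro u
    by_cases hu : u = root
    · rw [exLr u hu]
      norm_num
    · linarith [hxLhalf u hu]
  · intro u
    by_cases hu : ℓ u
    · linarith [(hxRl u hu).2]
    · linarith [(hxRnl u hu).2]
  · intro u
    by_cases hu : u = root
    · rw [exLr u hu]
      linarith [hxR1 u]
    · by_cases hl : ℓ u
      · linarith [hxLlt2 u, (hxRl u hl).1]
      · have h1 := hnr u hu
        have h2 : 1/((dep u:ℝ)+2) < 1/(dep u:ℝ) := hfrac _ _ (by linarith) (by linarith)
        have h3 : 1/((dep u:ℝ)+2) < 1/((dep u:ℝ)+1) := hfrac _ _ (by linarith) (by linarith)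
        have he : (2:ℝ)/((dep u:ℝ)+2) = 1/((dep u:ℝ)+2) + 1/((dep u:ℝ)+2) := by ring
        rw [exL u hu, exRn u hl]
        linarith
  · exact fun u => (hvalid u).1
  · exact fun u => (hvalid u).2.1
  · exact fun u => (hvalid u).2.2
  · exact fun u _ => hxLlt2 u
  · intro u hu
    linarith [(hxRl u hu).1]
  · intro u hu
    exact (hxRnl u hu).2
  · -- the trichotomy
    intro u w hne
    rcases trich_abstract par dep root hdr hd hd0 u w hne with
      ⟨k, hk1, hk2, hk3⟩ | ⟨k, hk1, hk2, hk3⟩ | ⟨a, b, j, m, h1, h2, h3, h4, h5, h6, h7, h8⟩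
    · -- u is a (strict) ancestor of w
      rcases eq_or_lt_of_le hk1 with hk | hk
      · -- parent: crossing
        have hpw : par w = u := by
          rw [← hk] at hk2
          simpa using hk2
        have hwr : w ≠ root := by
          intro h
          rw [h, hdr] at hk3
          omega
        have hy := hnest 0 w u (by simpa using hpw) (by omega)
        have hx := hxcross u w hwr hpw
        exact Or.inr (Or.inl ⟨⟨hy.1, hy.2, hx.1, hx.2.1, hx.2.2⟩,
          (hadj u w).mpr (Or.inr ⟨hwr, hpw⟩)⟩)
      · -- far ancestor
        have hy := hnest (k-1) w u (by rw [show k - 1 + 1 = k by omega]; exact hk2) (by omega)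
        exact Or.inr (Or.inr (Or.inr (Or.inl ⟨⟨hy.1, hy.2, hxfar u w k (by omega) hk2 hk3⟩,
          hnadj_far u w k (by omega) hk2 hk3⟩)))
    · -- w is a (strict) ancestor of u
      rcases eq_or_lt_of_le hk1 with hk | hk
      · have hpu : par u = w := by
          rw [← hk] at hk2
          simpa using hk2
        have hur : u ≠ root := by
          intro h
          rw [h, hdr] at hk3
          omega
        have hy := hnest 0 u w (by simpa using hpu) (by omega)
        have hx := hxcross w u hur hpu
        exact Or.inr (Or.inr (Or.inl ⟨⟨hy.1, hy.2, hx.1, hx.2.1, hx.2.2⟩,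
          (hadj u w).mpr (Or.inl ⟨hur, hpu⟩)⟩))
      · have hy := hnest (k-1) u w (by rw [show k - 1 + 1 = k by omega]; exact hk2) (by omega)
        exact Or.inr (Or.inr (Or.inr (Or.inr ⟨⟨hy.1, hy.2, hxfar w u k (by omega) hk2 hk3⟩,
          fun hA => hnadj_far w u k (by omega) hk2 hk3 hA.symm⟩)))
    · -- divergent
      have har : a ≠ root := by
        intro h
        rw [h, hdr] at h8
        omega
      have hbr : b ≠ root := by
        intro h
        rw [h, hdr] at h7
        omega
      have hbr' : 1 ≤ dep b := by omega
      have hn1 := hnest0 j u a h1 h3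
      have hn2 := hnest0 m w b h2 h4
      have hnadj : ¬ T.Adj u w := by
        intro hA
        rcases (hadj u w).mp hA with ⟨hur, hpu⟩ | ⟨hwr, hpw⟩
        · have hdep : dep u = dep w + 1 := by rw [hd u hur, hpu]
          have hb2 : par^[m+1] u = b := by
            rw [Function.iterate_succ_apply, hpu]
            exact h2
          have hjm : j = m + 1 := by omega
          rw [hjm, hb2] at h1
          exact h5 h1.symm
        · have hdep : dep w = dep u + 1 := by rw [hd w hwr, hpw]
          have ha2 : par^[j+1] w = a := by
            rw [Function.iterate_succ_apply, hpw]
            exact h1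
          have hjm : m = j + 1 := by omega
          rw [hjm, ha2] at h2
          exact h5 h2
      rcases hsib a b h5 h6 har hbr with h | h
      · exact Or.inl ⟨Or.inl (lt_of_le_of_lt hn1.2 (lt_of_lt_of_le h hn2.1)), hnadj⟩
      · exact Or.inl ⟨Or.inr (lt_of_le_of_lt hn2.2 (lt_of_lt_of_le h hn1.1)), hnadj⟩

end Layout


set_option maxHeartbeats 3000000 in
theorem glue_chandelier_isRestrictedFrameGraph'
    {V₁ V₂ : Type} [Fintype V₁] [Fintype V₂]
    (G₁ : SimpleGraph V₁) (G₂ : SimpleGraph V₂) (v : V₁) (p : V₂)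
    (h₁ : IsRestrictedFrameGraph G₁) (h₂ : IsChandelierWithPivot G₂ p) :
    IsRestrictedFrameGraph (glueAt G₁ G₂ v p) := by
  classical
  obtain ⟨F, hF⟩ := h₁
  obtain ⟨hT, hleaf⟩ := h₂
  set T : SimpleGraph ↥{u : V₂ | u ≠ p} := G₂.induce {u : V₂ | u ≠ p} with hTdef
  set ℓ : ↥{u : V₂ | u ≠ p} → Prop := fun u => IsLeaf T u with hℓdef
  haveI : Finite ↥{u : V₂ | u ≠ p} := Subtype.finite
  have hne : Nonempty ↥{u : V₂ | u ≠ p} := hT.isConnected.nonempty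
  -- root
  set root : ↥{u : V₂ | u ≠ p} :=
    if h : ∃ u : ↥{u : V₂ | u ≠ p}, ¬ ℓ u then h.choose else hne.some with hrootdef
  have hroot : ¬ ℓ root ∨ ∀ u, ℓ u := by
    rw [hrootdef]
    by_cases h : ∃ u : ↥{u : V₂ | u ≠ p}, ¬ ℓ u
    · rw [dif_pos h]
      exact Or.inl h.choose_spec
    · rw [dif_neg h]
      push_neg at h
      exact Or.inr h
  set par : ↥{u : V₂ | u ≠ p} → ↥{u : V₂ | u ≠ p} := tpar hT root with hpardef
  set dep : ↥{u : V₂ | u ≠ p} → ℕ := tdep hT root with hdepdef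
  have hdr : dep root = 0 := tdep_root hT root
  have hd : ∀ u, u ≠ root → dep u = dep (par u) + 1 := fun u hu => tdep_par hT hu
  have hd0 : ∀ u, dep u = 0 → u = root := fun u hu => tdep_eq_zero hT hu
  have hadj : ∀ u w, T.Adj u w ↔ (u ≠ root ∧ par u = w) ∨ (w ≠ root ∧ par w = u) :=
    fun u w => tadj_iff hT root u w
  have hchild : ∀ q w, q ≠ root → w ≠ root → par w = q → ¬ ℓ q := by
    intro q w hq hw hpw hleafq
    have h1 : T.Adj q (par q) := tpar_adj hT hq
    have h2 : T.Adj q w := ((hadj q w).mpr (Or.inr ⟨hw, hpw⟩))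
    have hne2 : par q ≠ w := by
      intro he
      have d1 : dep q = dep (par q) + 1 := hd q hq
      have d2 : dep w = dep q + 1 := by rw [hd w hw, hpw]
      rw [he] at d1
      omega
    have hcard : 1 < (T.neighborSet q).ncard := by
      rw [Set.one_lt_ncard_iff (Set.toFinite _)]
      exact ⟨par q, w, h1, h2, hne2⟩
    have : (T.neighborSet q).ncard = 1 := hleafq
    omega
  obtain ⟨n, ⟨e⟩⟩ := Finite.exists_equiv_fin ↥{u : V₂ | u ≠ p}
  have hidx : Function.Injective (fun u => (e u : ℕ)) := by
    intro a b h
    exact e.injective (Fin.ext h)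
  obtain ⟨L⟩ := goodLayout_exists T ℓ par dep root (fun u => (e u : ℕ)) n hdr hd hd0 hadj
    hidx (fun u => (e u).isLt) hroot hchild
  -- the free box
  obtain ⟨ρ, hρ0, hbx, hby, hfree, hpair⟩ := rep_freebox hF v
  set Lx : ℝ := (F v).x2 with hLx
  set Ly : ℝ := (F v).y2 with hLy
  set φx : ℝ → ℝ := fun t => Lx + ρ*(t-2)/8 with hφx
  set φy : ℝ → ℝ := fun s => (Ly - 3*ρ) + (2*ρ)*s with hφy
  have hφx_lt : ∀ {a b : ℝ}, a < b → φx a < φx b := by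
    intro a b h
    simp only [hφx]
    have : ρ*(a-2) < ρ*(b-2) := by nlinarith
    linarith
  have hφx_le : ∀ {a b : ℝ}, a ≤ b → φx a ≤ φx b := by
    intro a b h
    rcases eq_or_lt_of_le h with h | h
    · rw [h]
    · exact (hφx_lt h).le
  have hφx2 : φx 2 = Lx := by
    simp only [hφx]
    ring
  have hφy_lt : ∀ {a b : ℝ}, a < b → φy a < φy b := by
    intro a b h
    simp only [hφy]
    nlinarith
  have hφy_le : ∀ {a b : ℝ}, a ≤ b → φy a ≤ φy b := by
    intro a b h
    rcases eq_or_lt_of_le h with h | h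
    · rw [h]
    · exact (hφy_lt h).le
  -- the new boxes
  set NB : ↥{u : V₂ | u ≠ p} → Box := fun w =>
    ⟨φx (L.xL w), φx (L.xR w), φy (L.yc w), φy (L.yd w),
      hφx_lt (L.hxlt w), hφy_lt (L.hycd w)⟩ with hNB
  -- bounds of new boxes within the free box
  have hregB : ∀ (w : ↥{u : V₂ | u ≠ p}) (z : ℝ × ℝ), z ∈ (NB w).region →
      Lx - ρ < z.1 ∧ z.1 < Lx + ρ ∧ Ly - 3*ρ < z.2 ∧ z.2 < Ly - ρ := by
    intro w z hz
    obtain ⟨h1, h2, h3, h4⟩ := hz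
    have e1 : Lx - ρ < φx (L.xL w) := by
      have := hφx_lt (L.hxlo w)
      simp only [hφx] at this ⊢
      linarith
    have e2 : φx (L.xR w) < Lx + ρ := by
      have := hφx_lt (L.hxhi w)
      simp only [hφx] at this ⊢
      linarith
    have e3 : Ly - 3*ρ < φy (L.yc w) := by
      have := hφy_lt (L.hyc w)
      simp only [hφy] at this ⊢
      linarith
    have e4 : φy (L.yd w) < Ly - ρ := by
      have := hφy_lt (L.hyd w)
      simp only [hφy] at this ⊢
      linarith
    exact ⟨by linarith, by linarith, by linarith, by linarith⟩
  -- old frames avoid new boxes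
  have hOldNew : ∀ (u : V₁), u ≠ v → ∀ (w : ↥{u : V₂ | u ≠ p}) (z : ℝ × ℝ),
      z ∈ (NB w).region →
      z ∉ (F u).frame ∧ (((F u).frame ∩ (F v).frame).Nonempty → z ∉ (F u).region) := by
    intro u hu w z hz
    obtain ⟨e1, e2, e3, e4⟩ := hregB w z hz
    exact hfree u hu z e1.le e2.le e3.le e4.le
  -- the only part of the frame of `F v` meeting a new box is the vertical line x = Lx
  have hVframeNew : ∀ (w : ↥{u : V₂ | u ≠ p}) (z : ℝ × ℝ), z ∈ (NB w).region →
      z ∈ (F v).frame → z.1 = Lx := by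
    intro w z hz hzf
    obtain ⟨e1, e2, e3, e4⟩ := hregB w z hz
    rcases hzf.2 with h | h | h | h
    · exfalso
      rw [h] at e1
      simp only [hLx] at e1
      linarith
    · exact h
    · exfalso
      rw [h] at e3
      simp only [hLy] at e3
      linarith
    · exfalso
      rw [h] at e4
      simp only [hLy] at e4
      linarith
  -- component equations for new boxes
  have hNB1 : ∀ w, (NB w).x1 = φx (L.xL w) := fun w => rfl
  have hNB2 : ∀ w, (NB w).x2 = φx (L.xR w) := fun w => rfl
  have hNB3 : ∀ w, (NB w).y1 = φy (L.yc w) := fun w => rfl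
  have hNB4 : ∀ w, (NB w).y2 = φy (L.yd w) := fun w => rfl
  -- y bounds relative to F v
  have hyv1 : ∀ w, (F v).y1 < φy (L.yc w) := by
    intro w
    have h := hφy_lt (L.hyc w)
    simp only [hφy] at h ⊢
    simp only [hLy] at *
    linarith
  have hyv2 : ∀ w, φy (L.yd w) < (F v).y2 := by
    intro w
    have h := hφy_lt (L.hyd w)
    have hρ' : 0 < ρ := hρ0
    simp only [hφy] at h ⊢
    simp only [hLy] at *
    linarith
  -- x–line comparisons
  have hlt2 : ∀ w, ¬ ℓ w → φx (L.xR w) < Lx := by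
    intro w hw
    have := hφx_lt (L.nonleaf w hw)
    rwa [hφx2] at this
  have hleafx : ∀ w, ℓ w → φx (L.xL w) < Lx ∧ Lx < φx (L.xR w) := by
    intro w hw
    constructor
    · have := hφx_lt (L.leaf_lo w hw)
      rwa [hφx2] at this
    · have := hφx_lt (L.leaf_hi w hw)
      rwa [hφx2] at this
  have hxL2 : ∀ w, φx (L.xL w) < Lx := by
    intro w
    by_cases hw : ℓ w
    · exact (hleafx w hw).1
    · exact lt_trans (hφx_lt (L.hxlt w)) (hlt2 w hw)
  -- crossing points between F v and the frames of leaves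
  have hcrossV : ∀ w, ℓ w →
      ((Lx, φy (L.yd w)) ∈ (F v).rightSide ∩ (NB w).topSide) ∧
      ((Lx, φy (L.yc w)) ∈ (F v).rightSide ∩ (NB w).bottomSide) := by
    intro w hw
    obtain ⟨h2, h3⟩ := hleafx w hw
    have hy1 := hyv1 w
    have hy2 := hyv2 w
    have hyy := hφy_lt (L.hycd w)
    refine ⟨⟨⟨rfl, by linarith, by linarith⟩, ⟨rfl, h2.le, h3.le⟩⟩,
      ⟨⟨rfl, by linarith, by linarith⟩, ⟨rfl, h2.le, h3.le⟩⟩⟩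
  -- frames of non-leaves do not meet the frame of F v
  have hnonleafV : ∀ w, ¬ ℓ w → ∀ z, z ∈ (NB w).region → z ∉ (F v).frame := by
    intro w hw z hz hzf
    have h1 := hVframeNew w z hz hzf
    have h2 : z.1 ≤ φx (L.xR w) := hz.2.1
    have h3 := hlt2 w hw
    rw [h1] at h2
    linarith
  -- frames of leaves do meet the frame of F v
  have hleafV : ∀ w, ℓ w → (((F v).frame ∩ (NB w).frame).Nonempty) := by
    intro w hw
    obtain ⟨hc, -⟩ := hcrossV w hw
    exact ⟨(Lx, φy (L.yd w)), Box.mem_frame_of_right hc.1, Box.mem_frame_of_top hc.2⟩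
  -- region inclusion: new regions nested by y-intervals
  -- intersection of old/new frames
  have hInlInr : ∀ (a : V₁) (w : ↥{u : V₂ | u ≠ p}),
      ((F a).frame ∩ (NB w).frame).Nonempty ↔ (a = v ∧ ℓ w) := by
    intro a w
    constructor
    · rintro ⟨z, hza, hzw⟩
      by_cases ha : a = v
      · subst ha
        refine ⟨rfl, ?_⟩
        by_contra hw
        exact hnonleafV w hw z hzw.1 hza
      · exact absurd hza ((hOldNew a ha w z hzw.1).1)
    · rintro ⟨rfl, hw⟩
      exact hleafV w hw
  have hInrInr : ∀ u w : ↥{u : V₂ | u ≠ p}, u ≠ w →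
      (((NB u).frame ∩ (NB w).frame).Nonempty ↔ T.Adj u w) := by
    intro u w hne'
    constructor
    · rintro ⟨z, hzu, hzw⟩
      have bu1 : φy (L.yc u) ≤ z.2 := by have := hzu.1.2.2.1; rwa [hNB3] at this
      have bu2 : z.2 ≤ φy (L.yd u) := by have := hzu.1.2.2.2; rwa [hNB4] at this
      have bw1 : φy (L.yc w) ≤ z.2 := by have := hzw.1.2.2.1; rwa [hNB3] at this
      have bw2 : z.2 ≤ φy (L.yd w) := by have := hzw.1.2.2.2; rwa [hNB4] at this
      have bu3 : z.1 ≤ φx (L.xR u) := by have := hzu.1.2.1; rwa [hNB2] at this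
      have bw3 : z.1 ≤ φx (L.xR w) := by have := hzw.1.2.1; rwa [hNB2] at this
      have bu4 : φx (L.xL u) ≤ z.1 := by have := hzu.1.1; rwa [hNB1] at this
      have bw4 : φx (L.xL w) ≤ z.1 := by have := hzw.1.1; rwa [hNB1] at this
      rcases L.tri u w hne' with ⟨hy, hA⟩ | ⟨h, hA⟩ | ⟨h, hA⟩ | ⟨h, hA⟩ | ⟨h, hA⟩
      · exfalso
        rcases hy with h | h
        · linarith [hφy_lt h]
        · linarith [hφy_lt h]
      · exact hA
      · exact hA
      · exfalso
        linarith [hφx_lt h.2.2]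
      · exfalso
        linarith [hφx_lt h.2.2]
    · intro hA
      rcases L.tri u w hne' with ⟨hy, hA'⟩ | ⟨h, hA'⟩ | ⟨h, hA'⟩ | ⟨h, hA'⟩ | ⟨h, hA'⟩
      · exact absurd hA hA'
      · refine ⟨(φx (L.xR u), φy (L.yd w)), Box.mem_frame_of_right ⟨rfl, ?_, ?_⟩,
          Box.mem_frame_of_top ⟨rfl, ?_, ?_⟩⟩
        · rw [hNB3]
          exact (hφy_lt (lt_trans h.1 (L.hycd w))).le
        · rw [hNB4]
          exact (hφy_lt h.2.1).le
        · rw [hNB1]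
          exact (hφx_lt h.2.2.2.1).le
        · rw [hNB2]
          exact (hφx_lt h.2.2.2.2).le
      · refine ⟨(φx (L.xR w), φy (L.yd u)), Box.mem_frame_of_top ⟨rfl, ?_, ?_⟩,
          Box.mem_frame_of_right ⟨rfl, ?_, ?_⟩⟩
        · rw [hNB1]
          exact (hφx_lt h.2.2.2.1).le
        · rw [hNB2]
          exact (hφx_lt h.2.2.2.2).le
        · rw [hNB3]
          exact (hφy_lt (lt_trans h.1 (L.hycd u))).le
        · rw [hNB4]
          exact (hφy_lt h.2.1).le
      · exact absurd hA hA'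
      · exact absurd hA hA'
  -- unpacking helpers
  have hregNB : ∀ (w : ↥{u : V₂ | u ≠ p}) (z : ℝ × ℝ), z ∈ (NB w).region →
      φx (L.xL w) ≤ z.1 ∧ z.1 ≤ φx (L.xR w) ∧ φy (L.yc w) ≤ z.2 ∧ z.2 ≤ φy (L.yd w) :=
    fun w z hz => ⟨hz.1, hz.2.1, hz.2.2.1, hz.2.2.2⟩
  have hframeNB : ∀ (w : ↥{u : V₂ | u ≠ p}) (z : ℝ × ℝ), z ∈ (NB w).frame →
      (φx (L.xL w) ≤ z.1 ∧ z.1 ≤ φx (L.xR w) ∧ φy (L.yc w) ≤ z.2 ∧ z.2 ≤ φy (L.yd w)) ∧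
      (z.1 = φx (L.xL w) ∨ z.1 = φx (L.xR w) ∨ z.2 = φy (L.yc w) ∨ z.2 = φy (L.yd w)) :=
    fun w z hz => ⟨⟨hz.1.1, hz.1.2.1, hz.1.2.2.1, hz.1.2.2.2⟩, hz.2⟩
  have hcornery : ∀ (u : ↥{u : V₂ | u ≠ p}) (z : ℝ × ℝ), z ∈ (NB u).corners →
      (z.1 = φx (L.xL u) ∨ z.1 = φx (L.xR u)) ∧ (z.2 = φy (L.yc u) ∨ z.2 = φy (L.yd u)) := by
    intro u z hz
    rcases hz with h | h | h | h
    · exact ⟨Or.inl (by rw [h]), Or.inl (by rw [h])⟩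
    · exact ⟨Or.inl (by rw [h]), Or.inr (by rw [h])⟩
    · exact ⟨Or.inr (by rw [h]), Or.inl (by rw [h])⟩
    · rw [Set.mem_singleton_iff] at h
      exact ⟨Or.inr (by rw [h]), Or.inr (by rw [h])⟩
  have hcornerV : ∀ z : ℝ × ℝ, z ∈ (F v).corners → z.2 = (F v).y1 ∨ z.2 = (F v).y2 := by
    intro z hz
    rcases hz with h | h | h | h
    · exact Or.inl (by rw [h])
    · exact Or.inr (by rw [h])
    · exact Or.inl (by rw [h])
    · rw [Set.mem_singleton_iff] at h
      exact Or.inr (by rw [h])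
  -- corner points of new boxes, as frame members
  have hq1 : ∀ w : ↥{u : V₂ | u ≠ p}, (φx (L.xL w), φy (L.yc w)) ∈ (NB w).frame :=
    fun w => Box.mem_frame_of_left ⟨rfl, le_refl _, (hφy_lt (L.hycd w)).le⟩
  have hq2 : ∀ w : ↥{u : V₂ | u ≠ p}, (φx (L.xR w), φy (L.yc w)) ∈ (NB w).frame :=
    fun w => Box.mem_frame_of_bottom ⟨rfl, (hφx_lt (L.hxlt w)).le, le_refl _⟩
  -- no old frame fits inside a new region
  have hOldNotInNew : ∀ (a : V₁) (w : ↥{u : V₂ | u ≠ p}), ¬ ((F a).frame ⊆ (NB w).region) := by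
    intro a w hsub
    have hz : ((F a).x1, (F a).y1) ∈ (F a).frame :=
      ⟨⟨le_refl _, (F a).hx.le, le_refl _, (F a).hy.le⟩, Or.inl rfl⟩
    by_cases ha : a = v
    · obtain ⟨e1, -, -, -⟩ := hregB w _ (hsub hz)
      have e1' : Lx - ρ < (F a).x1 := e1
      rw [ha] at e1'
      linarith
    · exact (hOldNew a ha w _ (hsub hz)).1 hz
  -- no new frame fits inside the common region of two intersecting old frames
  have hNewNotInOldPair : ∀ (a b : V₁), a ≠ b → ((F a).frame ∩ (F b).frame).Nonempty →
      ∀ w : ↥{u : V₂ | u ≠ p}, ¬ ((NB w).frame ⊆ (F a).region ∩ (F b).region) := by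
    intro a b hab hint w hsub
    have hz := hq1 w
    have hzr : (φx (L.xL w), φy (L.yc w)) ∈ (NB w).region := Box.frame_subset_region _ hz
    have h2 := hsub hz
    obtain ⟨e1, e2, e3, e4⟩ := hregB w _ hzr
    by_cases ha : a = v
    · have hb : b ≠ v := fun h => hab (by rw [ha, h])
      refine (hfree b hb _ e1.le e2.le e3.le e4.le).2 ?_ h2.2
      obtain ⟨t, ht1, ht2⟩ := hint
      rw [ha] at ht1
      exact ⟨t, ht2, ht1⟩
    · by_cases hb : b = v
      · refine (hfree a ha _ e1.le e2.le e3.le e4.le).2 ?_ h2.1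
        rw [← hb]
        exact hint
      · exact hpair a b ha hb hab hint _ e1.le e2.le e3.le e4.le ⟨h2.1, h2.2⟩
  -- no new frame fits inside region (F v) ∩ region (NB w) for a leaf w
  have h5a : ∀ (w z' : ↥{u : V₂ | u ≠ p}), z' ≠ w → ℓ w →
      ¬ ((NB z').frame ⊆ (F v).region ∩ (NB w).region) := by
    intro w z' hzw hw hsub
    have hv1 := (hsub (hq1 z')).2
    have hv2 := (hsub (hq2 z')).1
    obtain ⟨r1, r2, r3, r4⟩ := hregNB w _ hv1
    have R3 : φy (L.yc w) ≤ φy (L.yc z') := r3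
    have R4 : φy (L.yc z') ≤ φy (L.yd w) := r4
    have V2 : φx (L.xR z') ≤ Lx := hv2.2.1
    have hwx : Lx < φx (L.xR w) := (hleafx w hw).2
    rcases L.tri z' w hzw with ⟨hy, -⟩ | ⟨h, -⟩ | ⟨h, -⟩ | ⟨h, -⟩ | ⟨h, -⟩
    · rcases hy with h | h
      · linarith [hφy_lt h, hφy_lt (L.hycd z')]
      · linarith [hφy_lt h]
    · linarith [hφy_lt h.1]
    · linarith [hφx_lt h.2.2.2.2]
    · linarith [hφy_lt h.1]
    · linarith [hφx_lt h.2.2, hφx_lt (L.hxlt z')]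
  -- no new frame fits inside the common region of a crossing new pair
  have h5b : ∀ (u w z' : ↥{u : V₂ | u ≠ p}), z' ≠ w →
      (L.yc u < L.yc w ∧ L.yd w < L.yd u ∧ L.xL u < L.xL w ∧ L.xL w < L.xR u ∧ L.xR u < L.xR w) →
      ¬ ((NB z').frame ⊆ (NB u).region ∩ (NB w).region) := by
    intro u w z' hzw hcr hsub
    have hv1 := (hsub (hq1 z')).2
    have hv2 := (hsub (hq2 z')).1
    obtain ⟨r1, r2, r3, r4⟩ := hregNB w _ hv1
    obtain ⟨s1, s2, s3, s4⟩ := hregNB u _ hv2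
    have R3 : φy (L.yc w) ≤ φy (L.yc z') := r3
    have R4 : φy (L.yc z') ≤ φy (L.yd w) := r4
    have S2 : φx (L.xR z') ≤ φx (L.xR u) := s2
    rcases L.tri z' w hzw with ⟨hy, -⟩ | ⟨h, -⟩ | ⟨h, -⟩ | ⟨h, -⟩ | ⟨h, -⟩
    · rcases hy with h | h
      · linarith [hφy_lt h, hφy_lt (L.hycd z')]
      · linarith [hφy_lt h]
    · linarith [hφy_lt h.1]
    · linarith [hφx_lt h.2.2.2.2, hφx_lt hcr.2.2.2.2]
    · linarith [hφy_lt h.1]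
    · linarith [hφx_lt h.2.2, hφx_lt (L.hxlt z'), hφx_lt hcr.2.2.2.2]
  refine ⟨Sum.elim F NB, ?_, ?_, ?_, ?_, ?_⟩
  · -- adj_iff
    intro A B hAB
    rcases A with a | u <;> rcases B with b | w
    · have hab : a ≠ b := fun h => hAB (by rw [h])
      simp only [glueAt, SimpleGraph.fromRel_adj, Sum.elim_inl]
      constructor
      · rintro ⟨-, h | h⟩
        · exact (hF.adj_iff a b hab).mp h
        · exact (hF.adj_iff a b hab).mp h.symm
      · intro h
        exact ⟨hAB, Or.inl ((hF.adj_iff a b hab).mpr h)⟩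
    · simp only [glueAt, SimpleGraph.fromRel_adj, Sum.elim_inl, Sum.elim_inr]
      constructor
      · rintro ⟨-, ⟨ha, hadj'⟩ | h⟩
        · exact (hInlInr a w).mpr ⟨ha, (hleaf w).mp hadj'⟩
        · exact absurd h not_false
      · intro h
        obtain ⟨ha, hl⟩ := (hInlInr a w).mp h
        exact ⟨hAB, Or.inl ⟨ha, (hleaf w).mpr hl⟩⟩
    · simp only [glueAt, SimpleGraph.fromRel_adj, Sum.elim_inl, Sum.elim_inr]
      constructor
      · rintro ⟨-, h | ⟨ha, hadj'⟩⟩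
        · exact absurd h not_false
        · obtain ⟨z, h1, h2⟩ := (hInlInr b u).mpr ⟨ha, (hleaf u).mp hadj'⟩
          exact ⟨z, h2, h1⟩
      · rintro ⟨z, h1, h2⟩
        obtain ⟨ha, hl⟩ := (hInlInr b u).mp ⟨z, h2, h1⟩
        exact ⟨hAB, Or.inr ⟨ha, (hleaf u).mpr hl⟩⟩
    · have huw : u ≠ w := fun h => hAB (by rw [h])
      simp only [glueAt, SimpleGraph.fromRel_adj, Sum.elim_inr]
      constructor
      · rintro ⟨-, h | h⟩
        · exact (hInrInr u w huw).mpr h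
        · exact (hInrInr u w huw).mpr h.symm
      · intro h
        exact ⟨hAB, Or.inl ((hInrInr u w huw).mp h)⟩
  · -- corner_free
    intro A B hAB
    apply Set.eq_empty_iff_forall_notMem.mpr
    intro z hz
    obtain ⟨hc, hf⟩ := hz
    rcases A with a | u <;> rcases B with b | w <;>
      simp only [Sum.elim_inl, Sum.elim_inr] at hc hf
    · exact rep_notmem_inter (hF.corner_free a b (fun h => hAB (by rw [h]))) hc hf
    · by_cases ha : a = v
      · subst ha
        obtain ⟨e1, e2, e3, e4⟩ := hregB w z (Box.frame_subset_region _ hf)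
        rcases hcornerV z hc with h | h
        · rw [h] at e3
          linarith
        · rw [h] at e4
          simp only [hLy] at e4
          linarith
      · exact (hOldNew a ha w z (Box.frame_subset_region _ hf)).1 (Box.corners_subset_frame _ hc)
    · have hzr : z ∈ (NB u).region :=
        Box.frame_subset_region _ (Box.corners_subset_frame _ hc)
      by_cases hb : b = v
      · subst hb
        have h1 := hVframeNew u z hzr hf
        obtain ⟨hx, -⟩ := hcornery u z hc
        rcases hx with h | h
        · rw [h] at h1
          linarith [hxL2 u]
        · rw [h] at h1
          by_cases hl : ℓ u
          · linarith [(hleafx u hl).2]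
          · linarith [hlt2 u hl]
      · exact (hOldNew b hb u z hzr).1 hf
    · have hne' : u ≠ w := fun h => hAB (by rw [h])
      obtain ⟨⟨r1, r2, r3, r4⟩, hdis⟩ := hframeNB w z hf
      have hzu : z ∈ (NB u).region :=
        Box.frame_subset_region _ (Box.corners_subset_frame _ hc)
      obtain ⟨s1, s2, s3, s4⟩ := hregNB u z hzu
      obtain ⟨hx, hy⟩ := hcornery u z hc
      rcases L.tri u w hne' with ⟨hy', -⟩ | ⟨h, -⟩ | ⟨h, -⟩ | ⟨h, -⟩ | ⟨h, -⟩
      · rcases hy' with h | h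
        · linarith [hφy_lt h]
        · linarith [hφy_lt h]
      · rcases hy with hcy | hcy <;> rw [hcy] at r3 r4 <;>
          linarith [hφy_lt h.1, hφy_lt h.2.1]
      · rcases hx with hcx | hcx <;> rcases hy with hcy | hcy <;>
          rw [hcx, hcy] at hdis <;> rcases hdis with h' | h' | h' | h' <;>
          linarith [hφx_lt h.2.2.1, hφx_lt h.2.2.2.1, hφx_lt h.2.2.2.2,
            hφy_lt h.1, hφy_lt h.2.1, hφy_lt (L.hycd u), hφy_lt (L.hycd w),
            hφx_lt (L.hxlt u), hφx_lt (L.hxlt w)]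
      · linarith [hφx_lt h.2.2]
      · linarith [hφx_lt h.2.2]
  · -- left_free
    intro A B hAB
    apply Set.eq_empty_iff_forall_notMem.mpr
    intro z hz
    obtain ⟨hc, hf⟩ := hz
    rcases A with a | u <;> rcases B with b | w <;>
      simp only [Sum.elim_inl, Sum.elim_inr] at hc hf
    · exact rep_notmem_inter (hF.left_free a b (fun h => hAB (by rw [h]))) hc hf
    · by_cases ha : a = v
      · subst ha
        obtain ⟨e1, -, -, -⟩ := hregB w z (Box.frame_subset_region _ hf)
        rw [hc.1] at e1
        simp only [hLx] at e1
        linarith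
      · exact (hOldNew a ha w z (Box.frame_subset_region _ hf)).1 (Box.mem_frame_of_left hc)
    · have hzr : z ∈ (NB u).region := Box.frame_subset_region _ (Box.mem_frame_of_left hc)
      by_cases hb : b = v
      · subst hb
        have h1 := hVframeNew u z hzr hf
        have h2 : z.1 = φx (L.xL u) := hc.1
        rw [h2] at h1
        linarith [hxL2 u]
      · exact (hOldNew b hb u z hzr).1 hf
    · have hne' : u ≠ w := fun h => hAB (by rw [h])
      obtain ⟨⟨r1, r2, r3, r4⟩, hdis⟩ := hframeNB w z hf
      have hx : z.1 = φx (L.xL u) := hc.1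
      have hy1 : φy (L.yc u) ≤ z.2 := hc.2.1
      have hy2 : z.2 ≤ φy (L.yd u) := hc.2.2
      rcases L.tri u w hne' with ⟨hy', -⟩ | ⟨h, -⟩ | ⟨h, -⟩ | ⟨h, -⟩ | ⟨h, -⟩
      · rcases hy' with h | h
        · linarith [hφy_lt h]
        · linarith [hφy_lt h]
      · rw [hx] at r1
        linarith [hφx_lt h.2.2.1]
      · rw [hx] at hdis
        rcases hdis with h' | h' | h' | h'
        · linarith [hφx_lt h.2.2.1]
        · linarith [hφx_lt h.2.2.2.1]
        · rw [h'] at hy1 hy2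
          linarith [hφy_lt h.1, hφy_lt h.2.1, hφy_lt (L.hycd u)]
        · rw [h'] at hy1 hy2
          linarith [hφy_lt h.1, hφy_lt h.2.1, hφy_lt (L.hycd u)]
      · rw [hx] at r1
        linarith [hφx_lt h.2.2, hφx_lt (L.hxlt u)]
      · rw [hx] at r2
        linarith [hφx_lt h.2.2]
  · -- right_cross
    intro A B hAB hint
    rcases A with a | u <;> rcases B with b | w <;>
      simp only [Sum.elim_inl, Sum.elim_inr] at hint ⊢
    · exact hF.right_cross a b (fun h => hAB (by rw [h])) hint
    · obtain ⟨z, hz1, hz2⟩ := hint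
      by_cases ha : a = v
      · rw [ha] at hz1 ⊢
        have hzr := Box.frame_subset_region _ hz2
        obtain ⟨r1, r2, -, -⟩ := hregNB w z hzr
        have hx : z.1 = (F v).x2 := hz1.1
        have hw : ℓ w := by
          by_contra hw
          have h3 := hlt2 w hw
          rw [hx] at r2
          simp only [hLx] at h3
          linarith
        obtain ⟨hc1, hc2⟩ := hcrossV w hw
        exact ⟨⟨_, hc1⟩, ⟨_, hc2⟩⟩
      · exact absurd (Box.mem_frame_of_right hz1) ((hOldNew a ha w z (Box.frame_subset_region _ hz2)).1)
    · obtain ⟨z, hz1, hz2⟩ := hint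
      have hzr : z ∈ (NB u).region := Box.frame_subset_region _ (Box.mem_frame_of_right hz1)
      by_cases hb : b = v
      · exfalso
        rw [hb] at hz2
        have h1 := hVframeNew u z hzr hz2
        have h2 : z.1 = φx (L.xR u) := hz1.1
        rw [h2] at h1
        by_cases hl : ℓ u
        · linarith [(hleafx u hl).2]
        · linarith [hlt2 u hl]
      · exact absurd hz2 ((hOldNew b hb u z hzr).1)
    · obtain ⟨z, hz1, hz2⟩ := hint
      have hne' : u ≠ w := fun h => hAB (by rw [h])
      obtain ⟨⟨r1, r2, r3, r4⟩, -⟩ := hframeNB w z hz2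
      have hx : z.1 = φx (L.xR u) := hz1.1
      have hy1 : φy (L.yc u) ≤ z.2 := hz1.2.1
      have hy2 : z.2 ≤ φy (L.yd u) := hz1.2.2
      rcases L.tri u w hne' with ⟨hy', -⟩ | ⟨h, -⟩ | ⟨h, -⟩ | ⟨h, -⟩ | ⟨h, -⟩
      · exfalso
        rcases hy' with h | h
        · linarith [hφy_lt h]
        · linarith [hφy_lt h]
      · refine ⟨⟨(φx (L.xR u), φy (L.yd w)), ⟨rfl, ?_, ?_⟩, ⟨rfl, ?_, ?_⟩⟩,
          ⟨(φx (L.xR u), φy (L.yc w)), ⟨rfl, ?_, ?_⟩, ⟨rfl, ?_, ?_⟩⟩⟩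
        · exact (hφy_lt (lt_trans h.1 (L.hycd w))).le
        · exact (hφy_lt h.2.1).le
        · exact (hφx_lt h.2.2.2.1).le
        · exact (hφx_lt h.2.2.2.2).le
        · exact (hφy_lt h.1).le
        · exact (hφy_lt (lt_trans (L.hycd w) h.2.1)).le
        · exact (hφx_lt h.2.2.2.1).le
        · exact (hφx_lt h.2.2.2.2).le
      · exfalso
        rw [hx] at r2
        linarith [hφx_lt h.2.2.2.2]
      · exfalso
        rw [hx] at r1
        linarith [hφx_lt h.2.2]
      · exfalso
        rw [hx] at r2
        linarith [hφx_lt h.2.2, hφx_lt (L.hxlt u)]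
  · -- not_nested
    intro A B W hAB hWA hWB hint hsub
    rcases A with a | u <;> rcases B with b | w <;>
      simp only [Sum.elim_inl, Sum.elim_inr] at hint hsub
    · have hab : a ≠ b := fun h => hAB (by rw [h])
      rcases W with wo | z' <;> simp only [Sum.elim_inl, Sum.elim_inr] at hsub
      · exact hF.not_nested a b wo hab (fun h => hWA (by rw [h])) (fun h => hWB (by rw [h]))
          hint hsub
      · exact hNewNotInOldPair a b hab hint z' hsub
    · obtain ⟨ha, hw⟩ := (hInlInr a w).mp hint
      subst ha
      rcases W with wo | z' <;> simp only [Sum.elim_inl, Sum.elim_inr] at hsub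
      · exact hOldNotInNew wo w (fun z hz => (hsub hz).2)
      · have hzw : z' ≠ w := fun h => hWB (by rw [h])
        exact h5a w z' hzw hw hsub
    · obtain ⟨hb, hw⟩ := (hInlInr b u).mp ⟨_, hint.some_mem.2, hint.some_mem.1⟩
      subst hb
      rcases W with wo | z' <;> simp only [Sum.elim_inl, Sum.elim_inr] at hsub
      · exact hOldNotInNew wo u (fun z hz => (hsub hz).1)
      · have hzw : z' ≠ u := fun h => hWA (by rw [h])
        exact h5a u z' hzw hw (fun z hz => ⟨(hsub hz).2, (hsub hz).1⟩)
    · have hne' : u ≠ w := fun h => hAB (by rw [h])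
      have hA : T.Adj u w := (hInrInr u w hne').mp hint
      rcases W with wo | z' <;> simp only [Sum.elim_inl, Sum.elim_inr] at hsub
      · exact hOldNotInNew wo u (fun z hz => (hsub hz).1)
      · have hz'u : z' ≠ u := fun h => hWA (by rw [h])
        have hz'w : z' ≠ w := fun h => hWB (by rw [h])
        rcases L.tri u w hne' with ⟨-, hA'⟩ | ⟨h, -⟩ | ⟨h, -⟩ | ⟨-, hA'⟩ | ⟨-, hA'⟩
        · exact hA' hA
        · exact h5b u w z' hz'w h hsub
        · exact h5b w u z' hz'u h (fun z hz => ⟨(hsub hz).2, (hsub hz).1⟩)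
        · exact hA' hA
        · exact hA' hA


/-- Let `G₁` be a restricted frame graph, let `G₂` be a chandelier
with pivot `p`, and let `v` be a vertex of `G₁`. Then the graph obtained from the
disjoint union of `G₁` and `G₂` by identifying `v` with `p` is a restricted frame
graph. -/
theorem glue_chandelier_isRestrictedFrameGraph
    {V₁ V₂ : Type} [Fintype V₁] [Fintype V₂]
    (G₁ : SimpleGraph V₁) (G₂ : SimpleGraph V₂) (v : V₁) (p : V₂)
    (h₁ : IsRestrictedFrameGraph G₁) (h₂ : IsChandelierWithPivot G₂ p) :
    IsRestrictedFrameGraph (glueAt G₁ G₂ v p) :=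
  glue_chandelier_isRestrictedFrameGraph' G₁ G₂ v p h₁ h₂
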